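/- Let R be a unital alternative ring with nontrivial idempotent e₁ and e₂ = 1 − e₁, k-torsion free for every k ∈ {2, 3, n−1, n−3} with k ≥ 1, satisfying conditions (1), (2), (3) and (4), and let D : R → R be a multiplicative Lie n-derivation (n ≥ 2) satisfying conditions (a), (b), (c) and with D(e₁) ∈ Z(R). Then for i ≠ j in {1,2}, for all a ∈ R_ij and b ∈ R_ji, one has D(a*b) − (D(a)*b + a*D(b)) ∈ Z(R). -/
import Mathlib


/-- The commutative center of a (possibly non-associative, non-unital) ring. -/
def rctr (R : Type*) [NonUnitalNonAssocRing R] : Set R := {z | ∀ x, z * x = x * z}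

/-- `R` is an alternative ring. -/
def IsAlt (R : Type*) [NonUnitalNonAssocRing R] : Prop :=
  ∀ x y : R, (x * x) * y = x * (x * y) ∧ (y * x) * x = y * (x * x)

/-- Peirce components relative to an idempotent `e`. -/
def P11 {R : Type*} [NonUnitalNonAssocRing R] (e : R) : Set R := {x | e * x = x ∧ x * e = x}
def P12 {R : Type*} [NonUnitalNonAssocRing R] (e : R) : Set R := {x | e * x = x ∧ x * e = 0}
def P21 {R : Type*} [NonUnitalNonAssocRing R] (e : R) : Set R := {x | e * x = 0 ∧ x * e = x}
def P22 {R : Type*} [NonUnitalNonAssocRing R] (e : R) : Set R := {x | e * x = 0 ∧ x * e = 0}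

/-- The iterated commutator `p_n`: `p_1(x) = x`,
`p_n(x_1,…,x_n) = [p_{n-1}(x_1,…,x_{n-1}), x_n]`. -/
def pn {R : Type*} [NonUnitalNonAssocRing R] : (n : ℕ) → (Fin n → R) → R
  | 0, _ => 0
  | 1, x => x 0
  | (m+2), x =>
      pn (m+1) (fun i => x i.castSucc) * x (Fin.last (m+1))
        - x (Fin.last (m+1)) * pn (m+1) (fun i => x i.castSucc)

/-- A (not necessarily additive) map `D` is a multiplicative Lie `n`-derivation. -/
def IsMultLieNDeriv {R : Type*} [NonUnitalNonAssocRing R] (n : ℕ) (D : R → R) : Prop :=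
  ∀ x : Fin n → R, D (pn n x) = ∑ i : Fin n, pn n (Function.update x i (D (x i)))

namespace S18


variable {R : Type*} [NonAssocRing R]

def A3 (x y z : R) : R := x * y * z - x * (y * z)

def br (x y : R) : R := x * y - y * x

structure Ctx (R : Type*) [NonAssocRing R] : Type _ where
  e1 : R
  halt : IsAlt R
  he : e1 * e1 = e1
  tor2 : ∀ x : R, x + x = 0 → x = 0
  tor3 : ∀ x : R, x + x + x = 0 → x = 0
  hc1a : ∀ x ∈ P12 e1, (∀ y ∈ P21 e1, x * y = 0) → x = 0
  hc1b : ∀ x ∈ P21 e1, (∀ y ∈ P12 e1, x * y = 0) → x = 0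
  hc2a : ∀ x ∈ P11 e1, (∀ y ∈ P12 e1, x * y = 0) → x = 0
  hc2b : ∀ x ∈ P11 e1, (∀ y ∈ P21 e1, y * x = 0) → x = 0
  hc3a : ∀ x ∈ P22 e1, (∀ y ∈ P12 e1, y * x = 0) → x = 0
  hc3b : ∀ x ∈ P22 e1, (∀ y ∈ P21 e1, x * y = 0) → x = 0
  hc4 : ∀ z ∈ rctr R, z ≠ 0 → ∀ r : R, ∃ s : R, z * s = r

/-! ### Alternative-law consequences -/

lemma la (C : Ctx R) (x y : R) : A3 x x y = 0 := sub_eq_zero.mpr (C.halt x y).1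
lemma ra (C : Ctx R) (x y : R) : A3 y x x = 0 := sub_eq_zero.mpr (C.halt x y).2

lemma a3_addl (x x' y z : R) : A3 (x + x') y z = A3 x y z + A3 x' y z := by
  simp only [A3, add_mul, mul_add]; abel

lemma a3_addm (x y y' z : R) : A3 x (y + y') z = A3 x y z + A3 x y' z := by
  simp only [A3, add_mul, mul_add]; abel

lemma a3_addr (x y z z' : R) : A3 x y (z + z') = A3 x y z + A3 x y z' := by
  simp only [A3, add_mul, mul_add]; abel

lemma linL (C : Ctx R) (x z y : R) : A3 x z y = - A3 z x y := by
  have h := la C (x + z) y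
  rw [a3_addl, a3_addm, a3_addm, la C, la C] at h
  have h2 : A3 x z y + A3 z x y = 0 := by rw [← h]; abel
  exact eq_neg_of_add_eq_zero_left h2

lemma linR (C : Ctx R) (y x z : R) : A3 y x z = - A3 y z x := by
  have h := ra C (x + z) y
  rw [a3_addm, a3_addr, a3_addr, ra C, ra C] at h
  have h2 : A3 y x z + A3 y z x = 0 := by rw [← h]; abel
  exact eq_neg_of_add_eq_zero_left h2

lemma cyc (C : Ctx R) (x y z : R) : A3 x y z = A3 z x y := by
  rw [linR C x y z, linL C x z y, neg_neg]

lemma swap13 (C : Ctx R) (x y z : R) : A3 x y z = - A3 z y x := by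
  have h : A3 z y x = - A3 x y z := by rw [linL C z y x, cyc C y z x]
  rw [h, neg_neg]

lemma a3_flex (C : Ctx R) (x y : R) : A3 x y x = 0 := by
  rw [linL C x y x, ra C, neg_zero]

lemma flex (C : Ctx R) (x y : R) : (x * y) * x = x * (y * x) :=
  sub_eq_zero.mp (a3_flex C x y)

/-! ### e₂ and membership basics -/

def Ctx.e2 (C : Ctx R) : R := 1 - C.e1

lemma e1e2 (C : Ctx R) : C.e1 * C.e2 = 0 := by
  simp [Ctx.e2, mul_sub, C.he]

lemma e2e1 (C : Ctx R) : C.e2 * C.e1 = 0 := by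
  simp [Ctx.e2, sub_mul, C.he]

lemma e2e2 (C : Ctx R) : C.e2 * C.e2 = C.e2 := by
  simp only [Ctx.e2, sub_mul, mul_sub, C.he, one_mul, mul_one]; abel

lemma e1_mem11 (C : Ctx R) : C.e1 ∈ P11 C.e1 := ⟨C.he, C.he⟩

lemma e2_mem22 (C : Ctx R) : C.e2 ∈ P22 C.e1 := ⟨e1e2 C, e2e1 C⟩

-- membership closure lemmas
lemma mem12_zero (C : Ctx R) : (0 : R) ∈ P12 C.e1 := ⟨mul_zero _, zero_mul _⟩
lemma mem21_zero (C : Ctx R) : (0 : R) ∈ P21 C.e1 := ⟨mul_zero _, zero_mul _⟩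
lemma mem11_zero (C : Ctx R) : (0 : R) ∈ P11 C.e1 := ⟨mul_zero _, zero_mul _⟩
lemma mem22_zero (C : Ctx R) : (0 : R) ∈ P22 C.e1 := ⟨mul_zero _, zero_mul _⟩

lemma mem12_add (C : Ctx R) {x y : R} (hx : x ∈ P12 C.e1) (hy : y ∈ P12 C.e1) :
    x + y ∈ P12 C.e1 := by
  refine ⟨?_, ?_⟩ <;> simp [mul_add, add_mul, hx.1, hx.2, hy.1, hy.2]

lemma mem21_add (C : Ctx R) {x y : R} (hx : x ∈ P21 C.e1) (hy : y ∈ P21 C.e1) :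
    x + y ∈ P21 C.e1 := by
  refine ⟨?_, ?_⟩ <;> simp [mul_add, add_mul, hx.1, hx.2, hy.1, hy.2]

lemma mem11_add (C : Ctx R) {x y : R} (hx : x ∈ P11 C.e1) (hy : y ∈ P11 C.e1) :
    x + y ∈ P11 C.e1 := by
  refine ⟨?_, ?_⟩ <;> simp [mul_add, add_mul, hx.1, hx.2, hy.1, hy.2]

lemma mem22_add (C : Ctx R) {x y : R} (hx : x ∈ P22 C.e1) (hy : y ∈ P22 C.e1) :
    x + y ∈ P22 C.e1 := by
  refine ⟨?_, ?_⟩ <;> simp [mul_add, add_mul, hx.1, hx.2, hy.1, hy.2]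

lemma mem12_neg (C : Ctx R) {x : R} (hx : x ∈ P12 C.e1) : -x ∈ P12 C.e1 := by
  refine ⟨?_, ?_⟩ <;> simp [hx.1, hx.2]

lemma mem21_neg (C : Ctx R) {x : R} (hx : x ∈ P21 C.e1) : -x ∈ P21 C.e1 := by
  refine ⟨?_, ?_⟩ <;> simp [hx.1, hx.2]

lemma mem11_neg (C : Ctx R) {x : R} (hx : x ∈ P11 C.e1) : -x ∈ P11 C.e1 := by
  refine ⟨?_, ?_⟩ <;> simp [hx.1, hx.2]

lemma mem22_neg (C : Ctx R) {x : R} (hx : x ∈ P22 C.e1) : -x ∈ P22 C.e1 := by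
  refine ⟨?_, ?_⟩ <;> simp [hx.1, hx.2]

lemma mem12_sub (C : Ctx R) {x y : R} (hx : x ∈ P12 C.e1) (hy : y ∈ P12 C.e1) :
    x - y ∈ P12 C.e1 := by
  rw [sub_eq_add_neg]; exact mem12_add C hx (mem12_neg C hy)

lemma mem21_sub (C : Ctx R) {x y : R} (hx : x ∈ P21 C.e1) (hy : y ∈ P21 C.e1) :
    x - y ∈ P21 C.e1 := by
  rw [sub_eq_add_neg]; exact mem21_add C hx (mem21_neg C hy)

lemma mem11_sub (C : Ctx R) {x y : R} (hx : x ∈ P11 C.e1) (hy : y ∈ P11 C.e1) :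
    x - y ∈ P11 C.e1 := by
  rw [sub_eq_add_neg]; exact mem11_add C hx (mem11_neg C hy)

lemma mem22_sub (C : Ctx R) {x y : R} (hx : x ∈ P22 C.e1) (hy : y ∈ P22 C.e1) :
    x - y ∈ P22 C.e1 := by
  rw [sub_eq_add_neg]; exact mem22_add C hx (mem22_neg C hy)

lemma mem12_zsmul (C : Ctx R) {x : R} (hx : x ∈ P12 C.e1) (k : ℤ) :
    k • x ∈ P12 C.e1 :=
  ⟨by rw [mul_smul_comm, hx.1], by rw [smul_mul_assoc, hx.2, smul_zero]⟩

lemma mem21_zsmul (C : Ctx R) {x : R} (hx : x ∈ P21 C.e1) (k : ℤ) :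
    k • x ∈ P21 C.e1 :=
  ⟨by rw [mul_smul_comm, hx.1, smul_zero], by rw [smul_mul_assoc, hx.2]⟩



/-! ### helpers for idempotent multiplications -/

lemma e_e_mul (C : Ctx R) (w : R) : C.e1 * (C.e1 * w) = C.e1 * w := by
  have h := la C C.e1 w
  have h2 := sub_eq_zero.mp h
  rw [C.he] at h2
  exact h2.symm

lemma mul_e_e (C : Ctx R) (w : R) : (w * C.e1) * C.e1 = w * C.e1 := by
  have h := ra C C.e1 w
  have h2 := sub_eq_zero.mp h
  rw [C.he] at h2
  exact h2

/-! ### the sixteen Peirce product rules -/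

lemma kill_nr (C : Ctx R) {w : R} (h : w * C.e1 = -w) : w = 0 := by
  have k := mul_e_e C w
  rw [h, neg_mul, h, neg_neg] at k
  exact C.tor2 w (eq_neg_iff_add_eq_zero.mp k)

lemma kill_ar (C : Ctx R) {w : R} (h : w * C.e1 = w + w) : w = 0 := by
  have k := mul_e_e C w
  rw [h, add_mul, h] at k
  exact C.tor2 w (add_eq_left.mp k)

lemma kill_nl (C : Ctx R) {w : R} (h : C.e1 * w = -w) : w = 0 := by
  have k := e_e_mul C w
  rw [h, mul_neg, h, neg_neg] at k
  exact C.tor2 w (eq_neg_iff_add_eq_zero.mp k)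

lemma kill_al (C : Ctx R) {w : R} (h : C.e1 * w = w + w) : w = 0 := by
  have k := e_e_mul C w
  rw [h, mul_add, h] at k
  exact C.tor2 w (add_eq_left.mp k)

section Products
variable (C : Ctx R) {x y : R}

lemma mul_11_11 (hx : x ∈ P11 C.e1) (hy : y ∈ P11 C.e1) :
    x * y ∈ P11 C.e1 := by
  obtain ⟨hx1, hx2⟩ := hx; obtain ⟨hy1, hy2⟩ := hy
  have hL := linL C C.e1 x y
  have hR := linR C x y C.e1
  simp only [A3, hx1, hx2, hy1, hy2, zero_mul, mul_zero, zero_sub, sub_zero, sub_self,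
    neg_zero, neg_neg] at hL hR
  -- hL : x*y - e*(x*y) = 0 ; hR : x*y*e - x*y = 0
  rw [sub_eq_zero] at hL hR
  exact ⟨hL.symm, hR⟩

lemma mul_11_12 (hx : x ∈ P11 C.e1) (hy : y ∈ P12 C.e1) :
    x * y ∈ P12 C.e1 := by
  obtain ⟨hx1, hx2⟩ := hx; obtain ⟨hy1, hy2⟩ := hy
  have hL := linL C C.e1 x y
  have hR := linR C x y C.e1
  simp only [A3, hx1, hx2, hy1, hy2, zero_mul, mul_zero, zero_sub, sub_zero, sub_self,
    neg_zero, neg_neg] at hL hR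
  -- hL : x*y - e*(x*y) = 0 ; hR : x*y*e = 0
  rw [sub_eq_zero] at hL
  exact ⟨hL.symm, hR⟩

lemma mul_12_12 (hx : x ∈ P12 C.e1) (hy : y ∈ P12 C.e1) :
    x * y ∈ P21 C.e1 := by
  obtain ⟨hx1, hx2⟩ := hx; obtain ⟨hy1, hy2⟩ := hy
  have hL := linL C C.e1 x y
  have hR := linR C x y C.e1
  simp only [A3, hx1, hx2, hy1, hy2, zero_mul, mul_zero, zero_sub, sub_zero, sub_self,
    neg_zero, neg_neg] at hL hR
  -- hL : x*y - e*(x*y) = x*y ; hR : x*y*e = x*y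
  rw [sub_eq_self] at hL
  exact ⟨hL, hR⟩

lemma mul_12_21 (hx : x ∈ P12 C.e1) (hy : y ∈ P21 C.e1) :
    x * y ∈ P11 C.e1 := by
  obtain ⟨hx1, hx2⟩ := hx; obtain ⟨hy1, hy2⟩ := hy
  have hL := linL C C.e1 x y
  have hR := linR C x y C.e1
  simp only [A3, hx1, hx2, hy1, hy2, zero_mul, mul_zero, zero_sub, sub_zero, sub_self,
    neg_zero, neg_neg] at hL hR
  -- hL : x*y - e*(x*y) = 0 ; hR : x*y*e - x*y = 0
  rw [sub_eq_zero] at hL hR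
  exact ⟨hL.symm, hR⟩

lemma mul_12_22 (hx : x ∈ P12 C.e1) (hy : y ∈ P22 C.e1) :
    x * y ∈ P12 C.e1 := by
  obtain ⟨hx1, hx2⟩ := hx; obtain ⟨hy1, hy2⟩ := hy
  have hL := linL C C.e1 x y
  have hR := linR C x y C.e1
  simp only [A3, hx1, hx2, hy1, hy2, zero_mul, mul_zero, zero_sub, sub_zero, sub_self,
    neg_zero, neg_neg] at hL hR
  rw [sub_eq_zero] at hL
  exact ⟨hL.symm, hR⟩

lemma mul_21_11 (hx : x ∈ P21 C.e1) (hy : y ∈ P11 C.e1) :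
    x * y ∈ P21 C.e1 := by
  obtain ⟨hx1, hx2⟩ := hx; obtain ⟨hy1, hy2⟩ := hy
  have hL := linL C C.e1 x y
  have hR := linR C x y C.e1
  simp only [A3, hx1, hx2, hy1, hy2, zero_mul, mul_zero, zero_sub, sub_zero, sub_self,
    neg_zero, neg_neg] at hL hR
  -- hL : -(e*(x*y)) = 0 ; hR : x*y*e - x*y = 0
  rw [neg_eq_zero] at hL
  rw [sub_eq_zero] at hR
  exact ⟨hL, hR⟩

lemma mul_21_12 (hx : x ∈ P21 C.e1) (hy : y ∈ P12 C.e1) :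
    x * y ∈ P22 C.e1 := by
  obtain ⟨hx1, hx2⟩ := hx; obtain ⟨hy1, hy2⟩ := hy
  have hL := linL C C.e1 x y
  have hR := linR C x y C.e1
  simp only [A3, hx1, hx2, hy1, hy2, zero_mul, mul_zero, zero_sub, sub_zero, sub_self,
    neg_zero, neg_neg] at hL hR
  rw [neg_eq_zero] at hL
  exact ⟨hL, hR⟩

lemma mul_21_21 (hx : x ∈ P21 C.e1) (hy : y ∈ P21 C.e1) :
    x * y ∈ P12 C.e1 := by
  obtain ⟨hx1, hx2⟩ := hx; obtain ⟨hy1, hy2⟩ := hy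
  have hL := linL C C.e1 x y
  have hR := linR C x y C.e1
  simp only [A3, hx1, hx2, hy1, hy2, zero_mul, mul_zero, zero_sub, sub_zero, sub_self,
    neg_zero, neg_neg] at hL hR
  -- hL : -(e*(x*y)) = -(x*y) ; hR : x*y*e - x*y = -(x*y)
  rw [neg_inj] at hL
  have hR2 : x*y*C.e1 = 0 := by
    have h2 := sub_eq_iff_eq_add.mp hR
    rw [neg_add_cancel] at h2
    exact h2
  exact ⟨hL, hR2⟩

lemma mul_22_21 (hx : x ∈ P22 C.e1) (hy : y ∈ P21 C.e1) :
    x * y ∈ P21 C.e1 := by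
  obtain ⟨hx1, hx2⟩ := hx; obtain ⟨hy1, hy2⟩ := hy
  have hL := linL C C.e1 x y
  have hR := linR C x y C.e1
  simp only [A3, hx1, hx2, hy1, hy2, zero_mul, mul_zero, zero_sub, sub_zero, sub_self,
    neg_zero, neg_neg] at hL hR
  rw [neg_eq_zero] at hL
  rw [sub_eq_zero] at hR
  exact ⟨hL, hR⟩

lemma mul_22_22 (hx : x ∈ P22 C.e1) (hy : y ∈ P22 C.e1) :
    x * y ∈ P22 C.e1 := by
  obtain ⟨hx1, hx2⟩ := hx; obtain ⟨hy1, hy2⟩ := hy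
  have hL := linL C C.e1 x y
  have hR := linR C x y C.e1
  simp only [A3, hx1, hx2, hy1, hy2, zero_mul, mul_zero, zero_sub, sub_zero, sub_self,
    neg_zero, neg_neg] at hL hR
  rw [neg_eq_zero] at hL
  exact ⟨hL, hR⟩

lemma mul_11_21 (hx : x ∈ P11 C.e1) (hy : y ∈ P21 C.e1) :
    x * y = 0 := by
  obtain ⟨hx1, hx2⟩ := hx; obtain ⟨hy1, hy2⟩ := hy
  have hL := linL C C.e1 x y
  have hR := linR C x y C.e1
  simp only [A3, hx1, hx2, hy1, hy2, zero_mul, mul_zero, zero_sub, sub_zero, sub_self,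
    neg_zero, neg_neg] at hL hR
  -- hL : x*y - e*(x*y) = -(x*y) : e*(x*y) = x*y + x*y
  have h : C.e1 * (x*y) = x*y + x*y := by
    rw [sub_eq_iff_eq_add] at hL
    have : x*y = -(x*y) + C.e1*(x*y) := hL
    rw [eq_neg_add_iff_add_eq] at this
    exact this.symm
  exact kill_al C h

lemma mul_11_22 (hx : x ∈ P11 C.e1) (hy : y ∈ P22 C.e1) :
    x * y = 0 := by
  obtain ⟨hx1, hx2⟩ := hx; obtain ⟨hy1, hy2⟩ := hy
  have hL := linL C C.e1 x y
  have hR := linR C x y C.e1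
  simp only [A3, hx1, hx2, hy1, hy2, zero_mul, mul_zero, zero_sub, sub_zero, sub_self,
    neg_zero, neg_neg] at hL hR
  -- hL : x*y - e*(x*y) = -(x*y) ; hR : x*y*e = -(x*y)
  exact kill_nr C hR

lemma mul_12_11 (hx : x ∈ P12 C.e1) (hy : y ∈ P11 C.e1) :
    x * y = 0 := by
  obtain ⟨hx1, hx2⟩ := hx; obtain ⟨hy1, hy2⟩ := hy
  have hL := linL C C.e1 x y
  have hR := linR C x y C.e1
  simp only [A3, hx1, hx2, hy1, hy2, zero_mul, mul_zero, zero_sub, sub_zero, sub_self,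
    neg_zero, neg_neg] at hL hR
  -- hR : x*y*e - x*y = x*y
  have h : x*y * C.e1 = x*y + x*y := by
    rw [sub_eq_iff_eq_add] at hR; exact hR
  exact kill_ar C h

lemma mul_21_22 (hx : x ∈ P21 C.e1) (hy : y ∈ P22 C.e1) :
    x * y = 0 := by
  obtain ⟨hx1, hx2⟩ := hx; obtain ⟨hy1, hy2⟩ := hy
  have hL := linL C C.e1 x y
  have hR := linR C x y C.e1
  simp only [A3, hx1, hx2, hy1, hy2, zero_mul, mul_zero, zero_sub, sub_zero, sub_self,
    neg_zero, neg_neg] at hL hR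
  -- hR : x*y*e = -(x*y)
  exact kill_nr C hR

lemma mul_22_11 (hx : x ∈ P22 C.e1) (hy : y ∈ P11 C.e1) :
    x * y = 0 := by
  obtain ⟨hx1, hx2⟩ := hx; obtain ⟨hy1, hy2⟩ := hy
  have hL := linL C C.e1 x y
  have hR := linR C x y C.e1
  simp only [A3, hx1, hx2, hy1, hy2, zero_mul, mul_zero, zero_sub, sub_zero, sub_self,
    neg_zero, neg_neg] at hL hR
  -- hL : -(e*(x*y)) = x*y
  exact kill_nl C (neg_eq_iff_eq_neg.mp hL)

lemma mul_22_12 (hx : x ∈ P22 C.e1) (hy : y ∈ P12 C.e1) :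
    x * y = 0 := by
  obtain ⟨hx1, hx2⟩ := hx; obtain ⟨hy1, hy2⟩ := hy
  have hL := linL C C.e1 x y
  have hR := linR C x y C.e1
  simp only [A3, hx1, hx2, hy1, hy2, zero_mul, mul_zero, zero_sub, sub_zero, sub_self,
    neg_zero, neg_neg] at hL hR
  exact kill_nl C (neg_eq_iff_eq_neg.mp hL)

end Products


/-! ### squares and anticommutativity -/

lemma sq12 (C : Ctx R) {x : R} (hx : x ∈ P12 C.e1) : x * x = 0 := by
  have hw := mul_12_12 C hx hx
  have h2 := sub_eq_zero.mp (ra C x C.e1)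
  rw [hx.1] at h2
  rw [hw.1] at h2
  exact h2

lemma sq21 (C : Ctx R) {y : R} (hy : y ∈ P21 C.e1) : y * y = 0 := by
  have hw := mul_21_21 C hy hy
  have h2 := sub_eq_zero.mp (la C y C.e1)
  rw [hy.2] at h2
  rw [hw.2] at h2
  exact h2.symm

lemma anti12 (C : Ctx R) {x y : R} (hx : x ∈ P12 C.e1) (hy : y ∈ P12 C.e1) :
    x * y = -(y * x) := by
  have h := sq12 C (mem12_add C hx hy)
  rw [add_mul, mul_add, mul_add, sq12 C hx, sq12 C hy] at h
  have h2 : x*y + y*x = 0 := by rw [← h]; abel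
  exact eq_neg_of_add_eq_zero_left h2

lemma anti21 (C : Ctx R) {x y : R} (hx : x ∈ P21 C.e1) (hy : y ∈ P21 C.e1) :
    x * y = -(y * x) := by
  have h := sq21 C (mem21_add C hx hy)
  rw [add_mul, mul_add, mul_add, sq21 C hx, sq21 C hy] at h
  have h2 : x*y + y*x = 0 := by rw [← h]; abel
  exact eq_neg_of_add_eq_zero_left h2

/-! ### bracket lemmas -/

lemma br_addl (x x' y : R) : br (x + x') y = br x y + br x' y := by
  simp only [br, add_mul, mul_add]; abel

lemma br_addr (x y y' : R) : br x (y + y') = br x y + br x y' := by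
  simp only [br, add_mul, mul_add]; abel

lemma br_subl (x x' y : R) : br (x - x') y = br x y - br x' y := by
  simp only [br, sub_mul, mul_sub]; abel

lemma br_subr (x y y' : R) : br x (y - y') = br x y - br x y' := by
  simp only [br, sub_mul, mul_sub]; abel

lemma br_zsmull (k : ℤ) (x y : R) : br (k • x) y = k • br x y := by
  simp only [br, smul_mul_assoc, mul_smul_comm, smul_sub]

lemma br_zsmulr (k : ℤ) (x y : R) : br x (k • y) = k • br x y := by
  simp only [br, smul_mul_assoc, mul_smul_comm, smul_sub]

lemma br_zerol (y : R) : br 0 y = 0 := by simp [br]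

lemma br_zeror (y : R) : br y 0 = 0 := by simp [br]

lemma br_central_l {z : R} (hz : z ∈ rctr R) (w : R) : br z w = 0 :=
  sub_eq_zero.mpr (hz w)

lemma br_central_r {z : R} (hz : z ∈ rctr R) (w : R) : br w z = 0 :=
  sub_eq_zero.mpr (hz w).symm

lemma br_antisymm (x y : R) : br x y = -br y x := by
  simp only [br, neg_sub]

/-! ### center lemmas -/

lemma rctr_zero : (0 : R) ∈ rctr R := fun x => by simp

lemma rctr_add {z w : R} (hz : z ∈ rctr R) (hw : w ∈ rctr R) : z + w ∈ rctr R :=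
  fun x => by rw [add_mul, mul_add, hz x, hw x]

lemma rctr_neg {z : R} (hz : z ∈ rctr R) : -z ∈ rctr R :=
  fun x => by rw [neg_mul, mul_neg, hz x]

lemma rctr_sub {z w : R} (hz : z ∈ rctr R) (hw : w ∈ rctr R) : z - w ∈ rctr R :=
  fun x => by rw [sub_mul, mul_sub, hz x, hw x]

lemma rctr_zsmul {z : R} (hz : z ∈ rctr R) (k : ℤ) : k • z ∈ rctr R :=
  fun x => by rw [smul_mul_assoc, mul_smul_comm, hz x]

/-! ### centrality implies nuclearity (3-torsion-free) -/

lemma nuc1 (C : Ctx R) {z : R} (hz : z ∈ rctr R) (s t : R) : A3 z s t = 0 := by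
  have h1 := linL C s z t
  have h2 : A3 s z t = z*s*t - s*(z*t) := by
    simp only [A3]; rw [← hz s]
  have h3 : z*s*t = A3 z s t + z*(s*t) := by simp only [A3]; abel
  have h5 := cyc C s t z
  have h6 : A3 s t z = z*(s*t) - s*(z*t) := by
    simp only [A3]; rw [← hz (s*t), ← hz t]
  have e1 : z*s*t - s*(z*t) = -A3 z s t := by rw [← h2, h1]
  have e2 : z*(s*t) - s*(z*t) = A3 z s t := by rw [← h6, h5]
  have e3 : A3 z s t + z*(s*t) - s*(z*t) = -A3 z s t := by rw [← h3]; exact e1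
  have e4 : A3 z s t + A3 z s t = -A3 z s t := by
    have h7 : A3 z s t + (z*(s*t) - s*(z*t)) = -A3 z s t := by
      rw [← add_sub_assoc]; exact e3
    rwa [e2] at h7
  exact C.tor3 _ (eq_neg_iff_add_eq_zero.mp e4)

lemma nuc2 (C : Ctx R) {z : R} (hz : z ∈ rctr R) (s t : R) : A3 s z t = 0 := by
  rw [linL C s z t, nuc1 C hz, neg_zero]

lemma nuc3 (C : Ctx R) {z : R} (hz : z ∈ rctr R) (s t : R) : A3 s t z = 0 := by
  rw [cyc C s t z, nuc1 C hz]

lemma zas1 (C : Ctx R) {z : R} (hz : z ∈ rctr R) (s t : R) : (z*s)*t = z*(s*t) :=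
  sub_eq_zero.mp (nuc1 C hz s t)

lemma zas2 (C : Ctx R) {z : R} (hz : z ∈ rctr R) (s t : R) : (s*z)*t = s*(z*t) :=
  sub_eq_zero.mp (nuc2 C hz s t)

lemma zas3 (C : Ctx R) {z : R} (hz : z ∈ rctr R) (s t : R) : (s*t)*z = s*(t*z) :=
  sub_eq_zero.mp (nuc3 C hz s t)

/-! ### fundamental commutator identity -/

lemma idc (C : Ctx R) (x y z : R) :
    br x (y*z) = br x y * z + y * br x z - (A3 x y z + A3 x y z + A3 x y z) := by
  have h2 := linL C y x z
  have h3 := cyc C y z x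
  simp only [A3, br, sub_mul, mul_sub] at h2 h3 ⊢
  rw [sub_eq_iff_eq_add] at h2 h3
  rw [h2, h3]
  abel



/-! ### Peirce projections -/

def pr11 (C : Ctx R) (w : R) : R := C.e1 * (w * C.e1)
def pr12 (C : Ctx R) (w : R) : R := C.e1 * (w * C.e2)
def pr21 (C : Ctx R) (w : R) : R := C.e2 * (w * C.e1)
def pr22 (C : Ctx R) (w : R) : R := C.e2 * (w * C.e2)

lemma e2mul (C : Ctx R) (X : R) : C.e2 * X = X - C.e1 * X := by
  rw [Ctx.e2, sub_mul, one_mul]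

lemma we2e (C : Ctx R) (w : R) : (w * C.e2) * C.e1 = 0 := by
  simp only [Ctx.e2, mul_sub, mul_one, sub_mul]
  rw [mul_e_e]; exact sub_self _

lemma e_e2mul (C : Ctx R) (v : R) : C.e1 * (C.e2 * v) = 0 := by
  simp only [Ctx.e2, sub_mul, one_mul, mul_sub]
  rw [e_e_mul]; exact sub_self _

lemma e2_emul (C : Ctx R) (v : R) : C.e2 * (C.e1 * v) = 0 := by
  simp only [Ctx.e2, sub_mul, one_mul]
  rw [e_e_mul]; exact sub_self _

lemma pr11_mem (C : Ctx R) (w : R) : pr11 C w ∈ P11 C.e1 := by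
  constructor
  · exact e_e_mul C _
  · show (C.e1 * (w * C.e1)) * C.e1 = _
    rw [flex C C.e1 (w * C.e1), mul_e_e]
    rfl

lemma pr12_mem (C : Ctx R) (w : R) : pr12 C w ∈ P12 C.e1 := by
  constructor
  · exact e_e_mul C _
  · show (C.e1 * (w * C.e2)) * C.e1 = 0
    rw [flex C C.e1 (w * C.e2), we2e, mul_zero]

lemma pr21_mem (C : Ctx R) (w : R) : pr21 C w ∈ P21 C.e1 := by
  constructor
  · exact e_e2mul C _
  · show (C.e2 * (w * C.e1)) * C.e1 = C.e2 * (w * C.e1)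
    rw [e2mul, sub_mul, mul_e_e, flex C C.e1 (w * C.e1), mul_e_e]

lemma pr22_mem (C : Ctx R) (w : R) : pr22 C w ∈ P22 C.e1 := by
  constructor
  · exact e_e2mul C _
  · show (C.e2 * (w * C.e2)) * C.e1 = 0
    rw [e2mul, sub_mul, we2e, flex C C.e1 (w * C.e2), we2e, mul_zero, sub_zero]

lemma pr_sum (C : Ctx R) (w : R) :
    pr11 C w + pr12 C w + pr21 C w + pr22 C w = w := by
  simp only [pr11, pr12, pr21, pr22, Ctx.e2, mul_sub, sub_mul, mul_one, one_mul]
  abel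

-- values of projections on Peirce members
lemma pr_12 (C : Ctx R) {w : R} (h : w ∈ P12 C.e1) :
    pr11 C w = 0 ∧ pr12 C w = w ∧ pr21 C w = 0 ∧ pr22 C w = 0 := by
  obtain ⟨h1, h2⟩ := h
  refine ⟨?_, ?_, ?_, ?_⟩
  · rw [pr11, h2, mul_zero]
  · rw [pr12, Ctx.e2, mul_sub, mul_one, h2, sub_zero, h1]
  · rw [pr21, h2, mul_zero]
  · rw [pr22, Ctx.e2, mul_sub, mul_one, h2, sub_zero, sub_mul, one_mul, h1, sub_self]

lemma pr_21 (C : Ctx R) {w : R} (h : w ∈ P21 C.e1) :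
    pr11 C w = 0 ∧ pr12 C w = 0 ∧ pr21 C w = w ∧ pr22 C w = 0 := by
  obtain ⟨h1, h2⟩ := h
  refine ⟨?_, ?_, ?_, ?_⟩
  · rw [pr11, h2, h1]
  · rw [pr12, Ctx.e2, mul_sub, mul_one, h2, sub_self, mul_zero]
  · rw [pr21, h2, Ctx.e2, sub_mul, one_mul, h1, sub_zero]
  · rw [pr22, Ctx.e2, mul_sub, mul_one, h2, sub_self, mul_zero]

lemma pr_11 (C : Ctx R) {w : R} (h : w ∈ P11 C.e1) :
    pr11 C w = w ∧ pr12 C w = 0 ∧ pr21 C w = 0 ∧ pr22 C w = 0 := by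
  obtain ⟨h1, h2⟩ := h
  refine ⟨?_, ?_, ?_, ?_⟩
  · rw [pr11, h2, h1]
  · rw [pr12, Ctx.e2, mul_sub, mul_one, h2, sub_self, mul_zero]
  · rw [pr21, h2, Ctx.e2, sub_mul, one_mul, h1, sub_self]
  · rw [pr22, Ctx.e2, mul_sub, mul_one, h2, sub_self, mul_zero]

lemma pr_22 (C : Ctx R) {w : R} (h : w ∈ P22 C.e1) :
    pr11 C w = 0 ∧ pr12 C w = 0 ∧ pr21 C w = 0 ∧ pr22 C w = w := by
  obtain ⟨h1, h2⟩ := h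
  refine ⟨?_, ?_, ?_, ?_⟩
  · rw [pr11, h2, mul_zero]
  · rw [pr12, Ctx.e2, mul_sub, mul_one, h2, sub_zero, h1]
  · rw [pr21, h2, mul_zero]
  · rw [pr22, Ctx.e2, mul_sub, mul_one, h2, sub_zero, sub_mul, one_mul, h1, sub_zero]

-- additivity etc of projections
lemma pr11_add (C : Ctx R) (w w' : R) : pr11 C (w + w') = pr11 C w + pr11 C w' := by
  simp only [pr11, add_mul, mul_add]
lemma pr12_add (C : Ctx R) (w w' : R) : pr12 C (w + w') = pr12 C w + pr12 C w' := by
  simp only [pr12, add_mul, mul_add]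
lemma pr21_add (C : Ctx R) (w w' : R) : pr21 C (w + w') = pr21 C w + pr21 C w' := by
  simp only [pr21, add_mul, mul_add]
lemma pr22_add (C : Ctx R) (w w' : R) : pr22 C (w + w') = pr22 C w + pr22 C w' := by
  simp only [pr22, add_mul, mul_add]

lemma pr11_sub (C : Ctx R) (w w' : R) : pr11 C (w - w') = pr11 C w - pr11 C w' := by
  simp only [pr11, sub_mul, mul_sub]
lemma pr12_sub (C : Ctx R) (w w' : R) : pr12 C (w - w') = pr12 C w - pr12 C w' := by
  simp only [pr12, sub_mul, mul_sub]
lemma pr21_sub (C : Ctx R) (w w' : R) : pr21 C (w - w') = pr21 C w - pr21 C w' := by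
  simp only [pr21, sub_mul, mul_sub]
lemma pr22_sub (C : Ctx R) (w w' : R) : pr22 C (w - w') = pr22 C w - pr22 C w' := by
  simp only [pr22, sub_mul, mul_sub]

lemma pr11_zero (C : Ctx R) : pr11 C 0 = 0 := by simp [pr11]
lemma pr12_zero (C : Ctx R) : pr12 C 0 = 0 := by simp [pr12]
lemma pr21_zero (C : Ctx R) : pr21 C 0 = 0 := by simp [pr21]
lemma pr22_zero (C : Ctx R) : pr22 C 0 = 0 := by simp [pr22]

lemma pr11_zsmul (C : Ctx R) (k : ℤ) (w : R) : pr11 C (k • w) = k • pr11 C w := by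
  simp only [pr11, smul_mul_assoc, mul_smul_comm]
lemma pr12_zsmul (C : Ctx R) (k : ℤ) (w : R) : pr12 C (k • w) = k • pr12 C w := by
  simp only [pr12, smul_mul_assoc, mul_smul_comm]
lemma pr21_zsmul (C : Ctx R) (k : ℤ) (w : R) : pr21 C (k • w) = k • pr21 C w := by
  simp only [pr21, smul_mul_assoc, mul_smul_comm]
lemma pr22_zsmul (C : Ctx R) (k : ℤ) (w : R) : pr22 C (k • w) = k • pr22 C w := by
  simp only [pr22, smul_mul_assoc, mul_smul_comm]

lemma pr12_central (C : Ctx R) {z : R} (hz : z ∈ rctr R) : pr12 C z = 0 := by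
  rw [pr12, hz C.e2, e_e2mul]

lemma pr21_central (C : Ctx R) {z : R} (hz : z ∈ rctr R) : pr21 C z = 0 := by
  rw [pr21, hz C.e1, e2_emul]

/-! ### diagonal elements -/

def IsDiag (C : Ctx R) (w : R) : Prop := pr12 C w = 0 ∧ pr21 C w = 0

lemma diag_11 (C : Ctx R) {w : R} (h : w ∈ P11 C.e1) : IsDiag C w :=
  ⟨(pr_11 C h).2.1, (pr_11 C h).2.2.1⟩

lemma diag_22 (C : Ctx R) {w : R} (h : w ∈ P22 C.e1) : IsDiag C w :=
  ⟨(pr_22 C h).2.1, (pr_22 C h).2.2.1⟩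

lemma diag_add (C : Ctx R) {w w' : R} (h : IsDiag C w) (h' : IsDiag C w') :
    IsDiag C (w + w') := by
  constructor
  · rw [pr12_add, h.1, h'.1, add_zero]
  · rw [pr21_add, h.2, h'.2, add_zero]

lemma diag_sub (C : Ctx R) {w w' : R} (h : IsDiag C w) (h' : IsDiag C w') :
    IsDiag C (w - w') := by
  constructor
  · rw [pr12_sub, h.1, h'.1, sub_zero]
  · rw [pr21_sub, h.2, h'.2, sub_zero]

lemma diag_zero (C : Ctx R) : IsDiag C (0 : R) := ⟨pr12_zero C, pr21_zero C⟩

lemma diag_zsmul (C : Ctx R) {w : R} (h : IsDiag C w) (k : ℤ) : IsDiag C (k • w) := by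
  constructor
  · rw [pr12_zsmul, h.1, smul_zero]
  · rw [pr21_zsmul, h.2, smul_zero]

lemma diag_central (C : Ctx R) {z : R} (hz : z ∈ rctr R) : IsDiag C z :=
  ⟨pr12_central C hz, pr21_central C hz⟩

lemma diag_decomp (C : Ctx R) {w : R} (h : IsDiag C w) :
    w = pr11 C w + pr22 C w := by
  have hs := pr_sum C w
  rw [h.1, h.2, add_zero, add_zero] at hs
  exact hs.symm

/-! ### directness / splitting -/

lemma split_11_22 (C : Ctx R) {a b : R} (ha : a ∈ P11 C.e1) (hb : b ∈ P22 C.e1)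
    (h : a + b = 0) : a = 0 ∧ b = 0 := by
  have h1 : C.e1 * (a + b) = a := by rw [mul_add, ha.1, hb.1, add_zero]
  rw [h, mul_zero] at h1
  refine ⟨h1.symm, ?_⟩
  have := h
  rw [← h1] at this
  simpa using this

lemma split_12_21 (C : Ctx R) {a b : R} (ha : a ∈ P12 C.e1) (hb : b ∈ P21 C.e1)
    (h : a + b = 0) : a = 0 ∧ b = 0 := by
  have h1 : C.e1 * (a + b) = a := by rw [mul_add, ha.1, hb.1, add_zero]
  rw [h, mul_zero] at h1
  refine ⟨h1.symm, ?_⟩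
  have := h
  rw [← h1] at this
  simpa using this

lemma split3 (C : Ctx R) {a b d : R} (ha : a ∈ P12 C.e1) (hb : b ∈ P21 C.e1)
    (hd : IsDiag C d) (h : a + b + d = 0) : a = 0 ∧ b = 0 ∧ d = 0 := by
  have h12 : pr12 C (a + b + d) = a := by
    rw [pr12_add, pr12_add, (pr_12 C ha).2.1, (pr_21 C hb).2.1, hd.1, add_zero, add_zero]
  have h21 : pr21 C (a + b + d) = b := by
    rw [pr21_add, pr21_add, (pr_12 C ha).2.2.1, (pr_21 C hb).2.2.1, hd.2, add_zero, zero_add]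
  rw [h, pr12_zero] at h12
  rw [h, pr21_zero] at h21
  refine ⟨h12.symm, h21.symm, ?_⟩
  rw [← h12, ← h21] at h
  simpa using h



/-! ### half-centrality lemmas -/

/-- a diagonal element commuting with all of `P21` is central -/
lemma half21 (C : Ctx R) {z : R} (hd : IsDiag C z)
    (hcom : ∀ y ∈ P21 C.e1, br z y = 0) : z ∈ rctr R := by
  have hm1 : pr11 C z ∈ P11 C.e1 := pr11_mem C z
  have hm2 : pr22 C z ∈ P22 C.e1 := pr22_mem C z
  set z1 := pr11 C z
  set z2 := pr22 C z
  have hdec : z = z1 + z2 := diag_decomp C hd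
  have hz_mul_11 : ∀ m ∈ P11 C.e1, z * m = z1 * m := by
    intro m hm; rw [hdec, add_mul, mul_22_11 C hm2 hm, add_zero]
  have h11_mul_z : ∀ m ∈ P11 C.e1, m * z = m * z1 := by
    intro m hm; rw [hdec, mul_add, mul_11_22 C hm hm2, add_zero]
  have hz_mul_22 : ∀ m ∈ P22 C.e1, z * m = z2 * m := by
    intro m hm; rw [hdec, add_mul, mul_11_22 C hm1 hm, zero_add]
  have h22_mul_z : ∀ m ∈ P22 C.e1, m * z = m * z2 := by
    intro m hm; rw [hdec, mul_add, mul_22_11 C hm hm1, zero_add]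
  have hz_mul_12 : ∀ x ∈ P12 C.e1, z * x = z1 * x := by
    intro x hx; rw [hdec, add_mul, mul_22_12 C hm2 hx, add_zero]
  have h12_mul_z : ∀ x ∈ P12 C.e1, x * z = x * z2 := by
    intro x hx; rw [hdec, mul_add, mul_12_11 C hx hm1, zero_add]
  have hz_mul_21 : ∀ y ∈ P21 C.e1, z * y = z2 * y := by
    intro y hy; rw [hdec, add_mul, mul_11_21 C hm1 hy, zero_add]
  have h21_mul_z : ∀ y ∈ P21 C.e1, y * z = y * z1 := by
    intro y hy; rw [hdec, mul_add, mul_21_22 C hy hm2, add_zero]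
  have hC11 : ∀ m ∈ P11 C.e1, br z m = 0 := by
    intro m hm
    have hmem : br z m ∈ P11 C.e1 := by
      rw [br, hz_mul_11 m hm, h11_mul_z m hm]
      exact mem11_sub C (mul_11_11 C hm1 hm) (mul_11_11 C hm hm1)
    apply C.hc2b _ hmem
    intro y hy
    have hA : A3 z y m = 0 := by
      rw [cyc C z y m]
      show m * z * y - m * (z * y) = 0
      rw [h11_mul_z m hm, hz_mul_21 y hy,
        mul_11_21 C (mul_11_11 C hm hm1) hy, mul_11_21 C hm (mul_22_21 C hm2 hy), sub_zero]
    have hid := idc C z y m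
    rw [hcom _ (mul_21_11 C hy hm), hcom y hy, hA, zero_mul] at hid
    simp only [zero_add, add_zero, sub_zero] at hid
    exact hid.symm
  have hC22 : ∀ m ∈ P22 C.e1, br z m = 0 := by
    intro m hm
    have hmem : br z m ∈ P22 C.e1 := by
      rw [br, hz_mul_22 m hm, h22_mul_z m hm]
      exact mem22_sub C (mul_22_22 C hm2 hm) (mul_22_22 C hm hm2)
    apply C.hc3b _ hmem
    intro y hy
    have hA : A3 z m y = 0 := by
      rw [cyc C z m y]
      show y * z * m - y * (z * m) = 0
      rw [h21_mul_z y hy, hz_mul_22 m hm,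
        mul_21_22 C (mul_21_11 C hy hm1) hm, mul_21_22 C hy (mul_22_22 C hm2 hm), sub_zero]
    have hid := idc C z m y
    rw [hcom _ (mul_22_21 C hm hy), hcom y hy, hA, mul_zero] at hid
    simp only [zero_add, add_zero, sub_zero] at hid
    exact hid.symm
  have hC12 : ∀ x ∈ P12 C.e1, br z x = 0 := by
    intro x hx
    have hmem : br z x ∈ P12 C.e1 := by
      rw [br, hz_mul_12 x hx, h12_mul_z x hx]
      exact mem12_sub C (mul_11_12 C hm1 hx) (mul_12_22 C hx hm2)
    apply C.hc1a _ hmem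
    intro y hy
    have hid1 := idc C z x y
    rw [hC11 _ (mul_12_21 C hx hy), hcom y hy, mul_zero] at hid1
    simp only [add_zero] at hid1
    have e1 : br z x * y = A3 z x y + A3 z x y + A3 z x y :=
      sub_eq_zero.mp hid1.symm
    have hid2 := idc C z y x
    rw [hC22 _ (mul_21_12 C hy hx), hcom y hy, zero_mul] at hid2
    simp only [zero_add] at hid2
    have e2 : y * br z x = A3 z y x + A3 z y x + A3 z y x :=
      sub_eq_zero.mp hid2.symm
    have hsum : br z x * y + y * br z x = 0 := by
      rw [e1, e2, linR C z y x]; abel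
    exact (split_11_22 C (mul_12_21 C hmem hy) (mul_21_12 C hy hmem) hsum).1
  intro r
  have hfin : br z r = 0 := by
    have h := pr_sum C r
    calc br z r = br z (pr11 C r + pr12 C r + pr21 C r + pr22 C r) := by rw [h]
    _ = 0 := by
        rw [br_addr, br_addr, br_addr, hC11 _ (pr11_mem C r), hC12 _ (pr12_mem C r),
          hcom _ (pr21_mem C r), hC22 _ (pr22_mem C r)]
        simp
  exact sub_eq_zero.mp hfin

/-- a diagonal element commuting with all of `P12` is central -/
lemma half12 (C : Ctx R) {z : R} (hd : IsDiag C z)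
    (hcom : ∀ x ∈ P12 C.e1, br z x = 0) : z ∈ rctr R := by
  have hm1 : pr11 C z ∈ P11 C.e1 := pr11_mem C z
  have hm2 : pr22 C z ∈ P22 C.e1 := pr22_mem C z
  set z1 := pr11 C z
  set z2 := pr22 C z
  have hdec : z = z1 + z2 := diag_decomp C hd
  have hz_mul_11 : ∀ m ∈ P11 C.e1, z * m = z1 * m := by
    intro m hm; rw [hdec, add_mul, mul_22_11 C hm2 hm, add_zero]
  have h11_mul_z : ∀ m ∈ P11 C.e1, m * z = m * z1 := by
    intro m hm; rw [hdec, mul_add, mul_11_22 C hm hm2, add_zero]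
  have hz_mul_22 : ∀ m ∈ P22 C.e1, z * m = z2 * m := by
    intro m hm; rw [hdec, add_mul, mul_11_22 C hm1 hm, zero_add]
  have h22_mul_z : ∀ m ∈ P22 C.e1, m * z = m * z2 := by
    intro m hm; rw [hdec, mul_add, mul_22_11 C hm hm1, zero_add]
  have hz_mul_12 : ∀ x ∈ P12 C.e1, z * x = z1 * x := by
    intro x hx; rw [hdec, add_mul, mul_22_12 C hm2 hx, add_zero]
  have h12_mul_z : ∀ x ∈ P12 C.e1, x * z = x * z2 := by
    intro x hx; rw [hdec, mul_add, mul_12_11 C hx hm1, zero_add]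
  have hz_mul_21 : ∀ y ∈ P21 C.e1, z * y = z2 * y := by
    intro y hy; rw [hdec, add_mul, mul_11_21 C hm1 hy, zero_add]
  have h21_mul_z : ∀ y ∈ P21 C.e1, y * z = y * z1 := by
    intro y hy; rw [hdec, mul_add, mul_21_22 C hy hm2, add_zero]
  have hC11 : ∀ m ∈ P11 C.e1, br z m = 0 := by
    intro m hm
    have hmem : br z m ∈ P11 C.e1 := by
      rw [br, hz_mul_11 m hm, h11_mul_z m hm]
      exact mem11_sub C (mul_11_11 C hm1 hm) (mul_11_11 C hm hm1)
    apply C.hc2a _ hmem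
    intro x hx
    have hA : A3 z m x = 0 := by
      rw [cyc C z m x]
      show x * z * m - x * (z * m) = 0
      rw [h12_mul_z x hx, hz_mul_11 m hm,
        mul_12_11 C (mul_12_22 C hx hm2) hm, mul_12_11 C hx (mul_11_11 C hm1 hm), sub_zero]
    have hid := idc C z m x
    rw [hcom _ (mul_11_12 C hm hx), hcom x hx, hA, mul_zero] at hid
    simp only [zero_add, add_zero, sub_zero] at hid
    exact hid.symm
  have hC22 : ∀ m ∈ P22 C.e1, br z m = 0 := by
    intro m hm
    have hmem : br z m ∈ P22 C.e1 := by
      rw [br, hz_mul_22 m hm, h22_mul_z m hm]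
      exact mem22_sub C (mul_22_22 C hm2 hm) (mul_22_22 C hm hm2)
    apply C.hc3a _ hmem
    intro x hx
    have hA : A3 z x m = 0 := by
      rw [cyc C z x m]
      show m * z * x - m * (z * x) = 0
      rw [h22_mul_z m hm, hz_mul_12 x hx,
        mul_22_12 C (mul_22_22 C hm hm2) hx, mul_22_12 C hm (mul_11_12 C hm1 hx), sub_zero]
    have hid := idc C z x m
    rw [hcom _ (mul_12_22 C hx hm), hcom x hx, hA, zero_mul] at hid
    simp only [zero_add, add_zero, sub_zero] at hid
    exact hid.symm
  have hC21 : ∀ y ∈ P21 C.e1, br z y = 0 := by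
    intro y hy
    have hmem : br z y ∈ P21 C.e1 := by
      rw [br, hz_mul_21 y hy, h21_mul_z y hy]
      exact mem21_sub C (mul_22_21 C hm2 hy) (mul_21_11 C hy hm1)
    apply C.hc1b _ hmem
    intro x hx
    have hid1 := idc C z y x
    rw [hC22 _ (mul_21_12 C hy hx), hcom x hx, mul_zero] at hid1
    simp only [add_zero] at hid1
    have e1 : br z y * x = A3 z y x + A3 z y x + A3 z y x :=
      sub_eq_zero.mp hid1.symm
    have hid2 := idc C z x y
    rw [hC11 _ (mul_12_21 C hx hy), hcom x hx, zero_mul] at hid2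
    simp only [zero_add] at hid2
    have e2 : x * br z y = A3 z x y + A3 z x y + A3 z x y :=
      sub_eq_zero.mp hid2.symm
    have hsum : x * br z y + br z y * x = 0 := by
      rw [e1, e2, linR C z x y]; abel
    exact (split_11_22 C (mul_12_21 C hx hmem) (mul_21_12 C hmem hx) hsum).2
  intro r
  have hfin : br z r = 0 := by
    have h := pr_sum C r
    calc br z r = br z (pr11 C r + pr12 C r + pr21 C r + pr22 C r) := by rw [h]
    _ = 0 := by
        rw [br_addr, br_addr, br_addr, hC11 _ (pr11_mem C r), hcom _ (pr12_mem C r),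
          hC21 _ (pr21_mem C r), hC22 _ (pr22_mem C r)]
        simp
  exact sub_eq_zero.mp hfin

/-! ### the z-trick -/

lemma central_sq_zero (C : Ctx R) {z : R} (hz : z ∈ rctr R) (h2 : z * z = 0) :
    z = 0 := by
  by_contra hne
  obtain ⟨s, hs⟩ := C.hc4 z hz hne 1
  have h4 : z = (z*z)*s := by
    rw [sub_eq_zero.mp (la C z s), hs, mul_one]
  rw [h2, zero_mul] at h4
  exact hne h4

lemma zt21 (C : Ctx R) {t x : R} (ht : t ∈ P21 C.e1) (hx : x ∈ P12 C.e1)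
    (hc : br x t ∈ rctr R) : x * t = 0 ∧ t * x = 0 := by
  have h1 : t * (t * x) = 0 := by
    rw [← sub_eq_zero.mp (la C t x), sq21 C ht, zero_mul]
  have h2 : (x * t) * t = 0 := by
    rw [sub_eq_zero.mp (ra C t x), sq21 C ht, mul_zero]
  have htz : t * br x t = (t * x) * t := by
    rw [br, mul_sub, h1, sub_zero, ← flex C t x]
  have hzt : br x t * t = -((t * x) * t) := by
    rw [br, sub_mul, h2, zero_sub]
  have e2 : t * br x t = -(t * br x t) := by
    calc t * br x t = br x t * t := (hc t).symm
    _ = -(t*x*t) := hzt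
    _ = -(t * br x t) := by rw [htz]
  have h3' : t * br x t = 0 := C.tor2 _ (eq_neg_iff_add_eq_zero.mp e2)
  have h3 : t*x*t = 0 := by rw [← htz]; exact h3'
  have hz0 : br x t * t = 0 := by rw [hzt, h3, neg_zero]
  have hzz : br x t * br x t = 0 := by
    have step : br x t * br x t = br x t * (x * t) - br x t * (t * x) := by
      rw [← mul_sub]; rfl
    rw [step, ← zas1 C hc x t, hc x, zas2 C hc x t, hz0, mul_zero,
      ← zas1 C hc t x, hz0, zero_mul, sub_zero]
  have hz00 : br x t = 0 := central_sq_zero C hc hzz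
  have hsum : x*t + -(t*x) = 0 := by rw [← sub_eq_add_neg]; exact hz00
  obtain ⟨ha, hb⟩ := split_11_22 C (mul_12_21 C hx ht) (mem22_neg C (mul_21_12 C ht hx)) hsum
  exact ⟨ha, neg_eq_zero.mp hb⟩


/-! ### the chain operation and pn computations -/

def chE (e : R) : ℕ → R → R
  | 0, w => w
  | (j+1), w => chE e j w * e - e * chE e j w

lemma chE_succ (e : R) (j : ℕ) (w : R) :
    chE e (j+1) w = chE e j w * e - e * chE e j w := rfl

lemma chE_zero (e : R) (j : ℕ) : chE e j (0 : R) = 0 := by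
  induction j with
  | zero => rfl
  | succ j ih => rw [chE_succ, ih, zero_mul, mul_zero, sub_zero]

lemma chE_add (e : R) (j : ℕ) (w w' : R) :
    chE e j (w + w') = chE e j w + chE e j w' := by
  induction j with
  | zero => rfl
  | succ j ih => rw [chE_succ, ih, chE_succ, chE_succ, add_mul, mul_add]; abel

lemma chE_sub (e : R) (j : ℕ) (w w' : R) :
    chE e j (w - w') = chE e j w - chE e j w' := by
  induction j with
  | zero => rfl
  | succ j ih => rw [chE_succ, ih, chE_succ, chE_succ, sub_mul, mul_sub]; abel

lemma chE_zsmul (e : R) (j : ℕ) (k : ℤ) (w : R) :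
    chE e j (k • w) = k • chE e j w := by
  induction j with
  | zero => rfl
  | succ j ih => rw [chE_succ, ih, chE_succ, smul_mul_assoc, mul_smul_comm, smul_sub]

lemma chE_p21 (C : Ctx R) {y : R} (hy : y ∈ P21 C.e1) (j : ℕ) :
    chE C.e1 j y = y := by
  induction j with
  | zero => rfl
  | succ j ih => rw [chE_succ, ih, hy.2, hy.1, sub_zero]

lemma chE_p12 (C : Ctx R) {x : R} (hx : x ∈ P12 C.e1) (j : ℕ) :
    chE C.e1 j x = ((-1 : ℤ)^j) • x := by
  induction j with
  | zero => rw [pow_zero, one_smul]; rfl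
  | succ j ih =>
    rw [chE_succ, ih, smul_mul_assoc, hx.2, smul_zero, mul_smul_comm, hx.1, zero_sub,
      pow_succ, mul_smul, neg_one_zsmul, smul_neg]

lemma epse (m : ℕ) : ((-1:ℤ)^m) * ((-1:ℤ)^m) = 1 := by
  rw [← pow_add]
  exact Even.neg_one_pow ⟨m, rfl⟩

lemma eps_cancel {w w' : R} (m : ℕ) (h : ((-1:ℤ)^m) • w = ((-1:ℤ)^m) • w') : w = w' := by
  have h2 : ((-1:ℤ)^m) • (((-1:ℤ)^m) • w) = ((-1:ℤ)^m) • (((-1:ℤ)^m) • w') := by rw [h]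
  rw [smul_smul, smul_smul, epse, one_smul, one_smul] at h2
  exact h2

lemma eps_zero {w : R} (m : ℕ) (h : ((-1:ℤ)^m) • w = 0) : w = 0 :=
  eps_cancel m (by rw [h, smul_zero])

def tS (e : R) (m : ℕ) (s : R) : Fin (m+1) → R := fun i => if i.val = 0 then s else e
def tA (e : R) (m : ℕ) (s t : R) : Fin (m+2) → R :=
  fun i => if i.val = 0 then s else if i.val = 1 then t else e
def tB (e : R) (m : ℕ) (s t : R) : Fin (m+2) → R :=
  fun i => if i.val = 0 then s else if i.val = m+1 then t else e

lemma pn_succ (m : ℕ) (x : Fin (m+2) → R) :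
    pn (m+2) x = pn (m+1) (fun i => x i.castSucc) * x (Fin.last (m+1))
      - x (Fin.last (m+1)) * pn (m+1) (fun i => x i.castSucc) := rfl

lemma pn_tS (e : R) (m : ℕ) (s : R) : pn (m+1) (tS e m s) = chE e m s := by
  induction m with
  | zero => rfl
  | succ m ih =>
    rw [pn_succ]
    have hpre : (fun i : Fin (m+1) => tS e (m+1) s i.castSucc) = tS e m s := by
      funext i; simp only [tS, Fin.coe_castSucc]
    have hlast : tS e (m+1) s (Fin.last (m+1)) = e := by
      simp [tS, Fin.val_last]
    rw [hpre, hlast, ih, chE_succ]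

lemma pn_tA (e : R) (m : ℕ) (s t : R) : pn (m+2) (tA e m s t) = chE e m (br s t) := by
  induction m with
  | zero => rfl
  | succ m ih =>
    rw [pn_succ]
    have hpre : (fun i : Fin (m+2) => tA e (m+1) s t i.castSucc) = tA e m s t := by
      funext i; simp only [tA, Fin.coe_castSucc]
    have hlast : tA e (m+1) s t (Fin.last (m+2)) = e := by
      simp [tA, Fin.val_last]
    rw [hpre, hlast, ih, chE_succ]

lemma pn_tB (e : R) (m : ℕ) (s t : R) : pn (m+2) (tB e m s t) = br (chE e m s) t := by
  rw [pn_succ]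
  have hpre : (fun i : Fin (m+1) => tB e m s t i.castSucc) = tS e m s := by
    funext i
    simp only [tB, tS, Fin.coe_castSucc]
    by_cases h : i.val = 0
    · simp [h]
    · have h2 : i.val ≠ m+1 := Nat.ne_of_lt i.isLt
      simp [h, h2]
  have hlast : tB e m s t (Fin.last (m+1)) = t := by
    simp [tB, Fin.val_last]
  rw [hpre, hlast, pn_tS]
  rfl

lemma pnZ : ∀ (mm : ℕ) (x : Fin (mm+1) → R) (i : Fin (mm+1)) (c : R),
    (∀ r : R, c * r = r * c) → i.val ≠ 0 → pn (mm+1) (Function.update x i c) = 0 := by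
  intro mm
  induction mm with
  | zero =>
    intro x i c hc hi
    exact absurd (Nat.lt_one_iff.mp i.isLt) hi
  | succ mm ih =>
    intro x i c hc hi
    by_cases hl : i = Fin.last (mm+1)
    · subst hl
      rw [pn_succ]
      have hpre : (fun j : Fin (mm+1) => Function.update x (Fin.last (mm+1)) c j.castSucc)
          = fun j => x j.castSucc := by
        funext j
        exact Function.update_of_ne (Fin.castSucc_lt_last j).ne _ _
      rw [hpre, Function.update_self, hc (pn (mm+1) fun j => x j.castSucc), sub_self]
    · have hv : i.val < mm+1 :=
        lt_of_le_of_ne (Nat.lt_succ_iff.mp i.isLt) (fun h => hl (Fin.ext h))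
      set i' : Fin (mm+1) := ⟨i.val, hv⟩ with hi'def
      have hi' : i = i'.castSucc := by
        apply Fin.ext; rfl
      rw [pn_succ]
      have hpre : (fun j : Fin (mm+1) => Function.update x i c j.castSucc)
          = Function.update (fun j : Fin (mm+1) => x j.castSucc) i' c := by
        funext j
        by_cases hji : j = i'
        · subst hji
          rw [hi', Function.update_self, Function.update_self]
        · rw [Function.update_of_ne (by rw [hi']; exact fun hcon => hji (Fin.castSucc_injective _ hcon)),
            Function.update_of_ne hji]
      rw [hpre, ih _ i' c hc hi, Function.update_of_ne (Ne.symm hl), zero_mul, mul_zero, sub_zero]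


/-! ### tuple entry and update lemmas -/

lemma fin_v0 {n : ℕ} {k : Fin (n+1)} (h : k ≠ 0) : k.val ≠ 0 :=
  fun hv => h (Fin.ext (by rw [hv, Fin.val_zero]))

lemma fin_v1 {n : ℕ} {k : Fin (n+2)} (h : k ≠ 1) : k.val ≠ 1 :=
  fun hv => h (Fin.ext (by rw [hv, Fin.val_one]))

lemma fin_vlast {n : ℕ} {k : Fin (n+1)} (h : k ≠ Fin.last n) : k.val ≠ n :=
  fun hv => h (Fin.ext (by rw [hv, Fin.val_last]))

lemma fin01 {n : ℕ} : (0 : Fin (n+2)) ≠ 1 := by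
  intro h
  have h2 := congrArg Fin.val h
  rw [Fin.val_zero, Fin.val_one] at h2
  exact Nat.zero_ne_one h2

lemma ne0last {n : ℕ} : (0 : Fin (n+2)) ≠ Fin.last (n+1) := by
  intro h
  have h2 := congrArg Fin.val h
  rw [Fin.val_zero, Fin.val_last] at h2
  exact Nat.succ_ne_zero n h2.symm

lemma tA_at0 (e : R) (m : ℕ) (s t : R) : tA e m s t 0 = s := by simp [tA]

lemma tA_at1 (e : R) (m : ℕ) (s t : R) : tA e m s t 1 = t := by simp [tA]

lemma tA_mid (e : R) (m : ℕ) (s t : R) {k : Fin (m+2)} (h0 : k ≠ 0) (h1 : k ≠ 1) :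
    tA e m s t k = e := by
  simp only [tA, if_neg (fin_v0 h0), if_neg (fin_v1 h1)]

lemma tB_at0 (e : R) (m : ℕ) (s t : R) : tB e m s t 0 = s := by simp [tB]

lemma tB_atlast (e : R) (m : ℕ) (s t : R) : tB e m s t (Fin.last (m+1)) = t := by
  simp [tB, Fin.val_last]

lemma tB_mid (e : R) (m : ℕ) (s t : R) {k : Fin (m+2)} (h0 : k ≠ 0)
    (h1 : k ≠ Fin.last (m+1)) : tB e m s t k = e := by
  simp only [tB, if_neg (fin_v0 h0), if_neg (fin_vlast h1)]

lemma upd_tA0 (e : R) (m : ℕ) (s t c : R) :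
    Function.update (tA e m s t) 0 c = tA e m c t := by
  funext j
  by_cases hj : j = 0
  · subst hj; rw [Function.update_self]; exact (tA_at0 e m c t).symm
  · rw [Function.update_of_ne hj]
    simp only [tA, if_neg (fin_v0 hj)]

lemma upd_tA1 (e : R) (m : ℕ) (s t c : R) :
    Function.update (tA e m s t) 1 c = tA e m s c := by
  funext j
  by_cases hj : j = 1
  · subst hj; rw [Function.update_self]; exact (tA_at1 e m s c).symm
  · rw [Function.update_of_ne hj]
    simp only [tA, if_neg (fin_v1 hj)]

lemma upd_tB0 (e : R) (m : ℕ) (s t c : R) :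
    Function.update (tB e m s t) 0 c = tB e m c t := by
  funext j
  by_cases hj : j = 0
  · subst hj; rw [Function.update_self]; exact (tB_at0 e m c t).symm
  · rw [Function.update_of_ne hj]
    simp only [tB, if_neg (fin_v0 hj)]

lemma upd_tBlast (e : R) (m : ℕ) (s t c : R) :
    Function.update (tB e m s t) (Fin.last (m+1)) c = tB e m s c := by
  funext j
  by_cases hj : j = Fin.last (m+1)
  · subst hj; rw [Function.update_self]; exact (tB_atlast e m s c).symm
  · rw [Function.update_of_ne hj]
    simp only [tB, if_neg (fin_vlast hj)]

/-! ### derivation context -/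

structure DCtx (R : Type*) [NonAssocRing R] extends Ctx R where
  m : ℕ
  D : R → R
  hD : IsMultLieNDeriv (m+2) D
  hccA : ∀ a ∈ P12 e1, D a ∈ P12 e1
  hccB : ∀ a ∈ P21 e1, D a ∈ P21 e1
  hDe1 : D e1 ∈ rctr R

lemma DA (X : DCtx R) (s t : R) :
    X.D (chE X.toCtx.e1 X.m (br s t)) =
      chE X.toCtx.e1 X.m (br (X.D s) t) + chE X.toCtx.e1 X.m (br s (X.D t)) := by
  have h := X.hD (tA X.toCtx.e1 X.m s t)
  rw [pn_tA] at h
  have hsum : (∑ i : Fin (X.m+2),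
      pn (X.m+2) (Function.update (tA X.toCtx.e1 X.m s t) i
        (X.D (tA X.toCtx.e1 X.m s t i)))) =
      pn (X.m+2) (Function.update (tA X.toCtx.e1 X.m s t) 0
        (X.D (tA X.toCtx.e1 X.m s t 0))) +
      pn (X.m+2) (Function.update (tA X.toCtx.e1 X.m s t) 1
        (X.D (tA X.toCtx.e1 X.m s t 1))) := by
    apply Fintype.sum_eq_add _ _ fin01
    intro k hk
    rw [tA_mid _ _ _ _ hk.1 hk.2]
    exact pnZ (X.m+1) _ k _ (fun r => X.hDe1 r) (fin_v0 hk.1)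
  rw [hsum, tA_at0, tA_at1, upd_tA0, upd_tA1, pn_tA, pn_tA] at h
  exact h

lemma DB (X : DCtx R) (s t : R) :
    X.D (br (chE X.toCtx.e1 X.m s) t) =
      br (chE X.toCtx.e1 X.m (X.D s)) t + br (chE X.toCtx.e1 X.m s) (X.D t) := by
  have h := X.hD (tB X.toCtx.e1 X.m s t)
  rw [pn_tB] at h
  have hsum : (∑ i : Fin (X.m+2),
      pn (X.m+2) (Function.update (tB X.toCtx.e1 X.m s t) i
        (X.D (tB X.toCtx.e1 X.m s t i)))) =
      pn (X.m+2) (Function.update (tB X.toCtx.e1 X.m s t) 0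
        (X.D (tB X.toCtx.e1 X.m s t 0))) +
      pn (X.m+2) (Function.update (tB X.toCtx.e1 X.m s t) (Fin.last (X.m+1))
        (X.D (tB X.toCtx.e1 X.m s t (Fin.last (X.m+1))))) := by
    apply Fintype.sum_eq_add _ _ ne0last
    intro k hk
    rw [tB_mid _ _ _ _ hk.1 hk.2]
    exact pnZ (X.m+1) _ k _ (fun r => X.hDe1 r) (fin_v0 hk.1)
  rw [hsum, tB_at0, tB_atlast, upd_tB0, upd_tBlast, pn_tB, pn_tB] at h
  exact h

/-! ### projections of negatives, members with e2 -/

lemma pr11_neg (C : Ctx R) (w : R) : pr11 C (-w) = - pr11 C w := by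
  simp only [pr11, neg_mul, mul_neg]
lemma pr12_neg (C : Ctx R) (w : R) : pr12 C (-w) = - pr12 C w := by
  simp only [pr12, neg_mul, mul_neg]
lemma pr21_neg (C : Ctx R) (w : R) : pr21 C (-w) = - pr21 C w := by
  simp only [pr21, neg_mul, mul_neg]
lemma pr22_neg (C : Ctx R) (w : R) : pr22 C (-w) = - pr22 C w := by
  simp only [pr22, neg_mul, mul_neg]

lemma p21_e2r (C : Ctx R) {y : R} (hy : y ∈ P21 C.e1) : y * C.e2 = 0 := by
  rw [Ctx.e2, mul_sub, mul_one, hy.2, sub_self]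
lemma p21_e2l (C : Ctx R) {y : R} (hy : y ∈ P21 C.e1) : C.e2 * y = y := by
  rw [e2mul, hy.1, sub_zero]
lemma p12_e2r (C : Ctx R) {x : R} (hx : x ∈ P12 C.e1) : x * C.e2 = x := by
  rw [Ctx.e2, mul_sub, mul_one, hx.2, sub_zero]
lemma p12_e2l (C : Ctx R) {x : R} (hx : x ∈ P12 C.e1) : C.e2 * x = 0 := by
  rw [e2mul, hx.1, sub_self]

/-! ### bracket memberships -/

lemma br_12_diag (C : Ctx R) {x md : R} (hx : x ∈ P12 C.e1) (hm : IsDiag C md) :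
    br x md ∈ P12 C.e1 := by
  have hdec := diag_decomp C hm
  rw [br, hdec, mul_add, add_mul, mul_12_11 C hx (pr11_mem C md),
    mul_22_12 C (pr22_mem C md) hx, zero_add, add_zero]
  exact mem12_sub C (mul_12_22 C hx (pr22_mem C md)) (mul_11_12 C (pr11_mem C md) hx)

lemma br_21_diag (C : Ctx R) {y md : R} (hy : y ∈ P21 C.e1) (hm : IsDiag C md) :
    br y md ∈ P21 C.e1 := by
  have hdec := diag_decomp C hm
  rw [br, hdec, mul_add, add_mul, mul_21_22 C hy (pr22_mem C md),
    mul_11_21 C (pr11_mem C md) hy, add_zero, zero_add]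
  exact mem21_sub C (mul_21_11 C hy (pr11_mem C md)) (mul_22_21 C (pr22_mem C md) hy)

lemma br_12_21_diag (C : Ctx R) {x s : R} (hx : x ∈ P12 C.e1) (hs : s ∈ P21 C.e1) :
    IsDiag C (br x s) :=
  diag_sub C (diag_11 C (mul_12_21 C hx hs)) (diag_22 C (mul_21_12 C hs hx))

lemma br_21_12_diag (C : Ctx R) {y x : R} (hy : y ∈ P21 C.e1) (hx : x ∈ P12 C.e1) :
    IsDiag C (br y x) :=
  diag_sub C (diag_22 C (mul_21_12 C hy hx)) (diag_11 C (mul_12_21 C hx hy))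

lemma br_12_12_mem (C : Ctx R) {x x' : R} (hx : x ∈ P12 C.e1) (hx' : x' ∈ P12 C.e1) :
    br x x' ∈ P21 C.e1 :=
  mem21_sub C (mul_12_12 C hx hx') (mul_12_12 C hx' hx)

lemma br_21_21_mem (C : Ctx R) {y y' : R} (hy : y ∈ P21 C.e1) (hy' : y' ∈ P21 C.e1) :
    br y y' ∈ P12 C.e1 :=
  mem12_sub C (mul_21_21 C hy hy') (mul_21_21 C hy' hy)

/-! ### basic D-layer lemmas -/

lemma br_e1 (C : Ctx R) (w : R) : br C.e1 w = pr12 C w - pr21 C w := by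
  have h1 : C.e1 * w = pr11 C w + pr12 C w := by
    simp only [pr11, pr12]
    rw [← mul_add]
    congr 1
    rw [Ctx.e2, mul_sub, mul_one]
    abel
  have h2 : w * C.e1 = pr11 C w + pr21 C w := by
    simp only [pr11, pr21, e2mul]
    abel
  rw [br, h1, h2]
  abel

lemma D0 (X : DCtx R) : X.D 0 = 0 := by
  have h := DA X 0 0
  rw [br_zerol, br_zerol, br_zeror, chE_zero, add_zero] at h
  exact h

lemma SAND (X : DCtx R) (w : R) :
    X.D (((-1:ℤ)^X.m) • pr12 X.toCtx w - pr21 X.toCtx w) =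
      ((-1:ℤ)^X.m) • pr12 X.toCtx (X.D w) - pr21 X.toCtx (X.D w) := by
  have h := DA X X.toCtx.e1 w
  have hz : br (X.D X.toCtx.e1) w = 0 := br_central_l X.hDe1 w
  rw [hz, chE_zero, zero_add, br_e1, br_e1, chE_sub, chE_sub,
    chE_p12 X.toCtx (pr12_mem _ _), chE_p21 X.toCtx (pr21_mem _ _),
    chE_p12 X.toCtx (pr12_mem _ _), chE_p21 X.toCtx (pr21_mem _ _)] at h
  exact h

lemma C2_21 (X : DCtx R) {y : R} (hy : y ∈ P21 X.toCtx.e1) : X.D (-y) = - X.D y := by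
  have h := SAND X y
  rw [(pr_21 X.toCtx hy).2.1, (pr_21 X.toCtx hy).2.2.1, smul_zero, zero_sub,
    (pr_21 X.toCtx (X.hccB y hy)).2.1, (pr_21 X.toCtx (X.hccB y hy)).2.2.1,
    smul_zero, zero_sub] at h
  exact h

lemma C2_12eps (X : DCtx R) {x : R} (hx : x ∈ P12 X.toCtx.e1) :
    X.D (((-1:ℤ)^X.m) • x) = ((-1:ℤ)^X.m) • X.D x := by
  have h := SAND X x
  rw [(pr_12 X.toCtx hx).2.1, (pr_12 X.toCtx hx).2.2.1, sub_zero,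
    (pr_12 X.toCtx (X.hccA x hx)).2.1, (pr_12 X.toCtx (X.hccA x hx)).2.2.1, sub_zero] at h
  exact h

lemma PART21 (X : DCtx R) {md s : R} (hm : IsDiag X.toCtx md) (hs : s ∈ P21 X.toCtx.e1) :
    pr12 X.toCtx (X.D (md + s)) = 0 ∧ pr21 X.toCtx (X.D (md + s)) = X.D s := by
  have h := SAND X (md + s)
  rw [pr12_add, pr21_add, hm.1, hm.2, zero_add, zero_add, (pr_21 X.toCtx hs).2.1,
    (pr_21 X.toCtx hs).2.2.1, smul_zero, zero_sub, C2_21 X hs] at h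
  constructor
  · have h12 := congrArg (pr12 X.toCtx) h
    rw [pr12_neg, (pr_21 X.toCtx (X.hccB s hs)).2.1, neg_zero, pr12_sub, pr12_zsmul,
      (pr_12 X.toCtx (pr12_mem X.toCtx _)).2.1,
      (pr_21 X.toCtx (pr21_mem X.toCtx _)).2.1, sub_zero] at h12
    exact eps_zero X.m h12.symm
  · have h21 := congrArg (pr21 X.toCtx) h
    rw [pr21_neg, (pr_21 X.toCtx (X.hccB s hs)).2.2.1, pr21_sub, pr21_zsmul,
      (pr_12 X.toCtx (pr12_mem X.toCtx _)).2.2.1,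
      (pr_21 X.toCtx (pr21_mem X.toCtx _)).2.2.1, smul_zero, zero_sub, neg_inj] at h21
    exact h21.symm

lemma PART12 (X : DCtx R) {md r : R} (hm : IsDiag X.toCtx md) (hr : r ∈ P12 X.toCtx.e1) :
    pr12 X.toCtx (X.D (md + r)) = X.D r ∧ pr21 X.toCtx (X.D (md + r)) = 0 := by
  have h := SAND X (md + r)
  rw [pr12_add, pr21_add, hm.1, hm.2, zero_add, zero_add, (pr_12 X.toCtx hr).2.1,
    (pr_12 X.toCtx hr).2.2.1, sub_zero, C2_12eps X hr] at h
  constructor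
  · have h12 := congrArg (pr12 X.toCtx) h
    rw [pr12_zsmul, (pr_12 X.toCtx (X.hccA r hr)).2.1, pr12_sub, pr12_zsmul,
      (pr_12 X.toCtx (pr12_mem X.toCtx _)).2.1,
      (pr_21 X.toCtx (pr21_mem X.toCtx _)).2.1, sub_zero] at h12
    exact (eps_cancel X.m h12).symm
  · have h21 := congrArg (pr21 X.toCtx) h
    rw [pr21_zsmul, (pr_12 X.toCtx (X.hccA r hr)).2.2.1, smul_zero, pr21_sub, pr21_zsmul,
      (pr_12 X.toCtx (pr12_mem X.toCtx _)).2.2.1,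
      (pr_21 X.toCtx (pr21_mem X.toCtx _)).2.2.1, smul_zero, zero_sub] at h21
    exact (neg_eq_zero.mp h21.symm)

lemma L1 (X : DCtx R) {md : R} (hm : IsDiag X.toCtx md) : IsDiag X.toCtx (X.D md) := by
  have h := PART12 X hm (mem12_zero X.toCtx)
  rw [add_zero] at h
  exact ⟨h.1.trans (D0 X), h.2⟩

lemma DQ (X : DCtx R) {q : R} (hq : q ∈ P21 X.toCtx.e1) (t : R) :
    X.D (br q t) = br (X.D q) t + br q (X.D t) := by
  have h := DB X q t
  rw [chE_p21 X.toCtx hq, chE_p21 X.toCtx (X.hccB q hq)] at h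
  exact h

lemma DX (X : DCtx R) {x : R} (hx : x ∈ P12 X.toCtx.e1) (t : R) :
    X.D (((-1:ℤ)^X.m) • br x t) = ((-1:ℤ)^X.m) • (br (X.D x) t + br x (X.D t)) := by
  have h := DB X x t
  rw [chE_p12 X.toCtx hx, chE_p12 X.toCtx (X.hccA x hx), br_zsmull, br_zsmull, br_zsmull,
    ← smul_add] at h
  exact h

/-! ### the (diagonal, P21)-defect is central -/

lemma XI (X : DCtx R) {md s : R} (hm : IsDiag X.toCtx md) (hs : s ∈ P21 X.toCtx.e1) :
    X.D (md + s) - X.D md - X.D s ∈ rctr R := by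
  have hVd : IsDiag X.toCtx (X.D (md + s) - X.D s) := by
    constructor
    · rw [pr12_sub, (PART21 X hm hs).1, (pr_21 X.toCtx (X.hccB s hs)).2.1, sub_zero]
    · rw [pr21_sub, (PART21 X hm hs).2, (pr_21 X.toCtx (X.hccB s hs)).2.2.1, sub_self]
  have hδd : IsDiag X.toCtx ((X.D (md + s) - X.D s) - X.D md) :=
    diag_sub X.toCtx hVd (L1 X hm)
  have hcom : ∀ x ∈ P12 X.toCtx.e1, br ((X.D (md + s) - X.D s) - X.D md) x = 0 := by
    intro x hx
    have h1 := DX X hx (md + s)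
    have harg : br x (md + s) = br x s + br x md := by rw [br_addr]; exact add_comm _ _
    rw [harg, smul_add] at h1
    have h1p := congrArg (pr12 X.toCtx) h1
    rw [(PART12 X (diag_zsmul X.toCtx (br_12_21_diag X.toCtx hx hs) _)
      (mem12_zsmul X.toCtx (br_12_diag X.toCtx hx hm) _)).1] at h1p
    have hWdec : X.D (md + s) = (X.D (md + s) - X.D s) + X.D s := by abel
    have hRHS12 : pr12 X.toCtx (br (X.D x) (md + s) + br x (X.D (md + s))) =
        br (X.D x) md + br x (X.D (md + s) - X.D s) := by
      rw [hWdec, br_addr (X.D x) md s, br_addr x (X.D (md + s) - X.D s) (X.D s),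
        pr12_add, pr12_add, pr12_add, ← hWdec,
        (pr_12 X.toCtx (br_12_diag X.toCtx (X.hccA x hx) hm)).2.1,
        (br_12_21_diag X.toCtx (X.hccA x hx) hs).1,
        (pr_12 X.toCtx (br_12_diag X.toCtx hx hVd)).2.1,
        (br_12_21_diag X.toCtx hx (X.hccB s hs)).1, add_zero, add_zero]
    rw [pr12_zsmul, hRHS12] at h1p
    have h2 := DX X hx md
    have h3 := eps_cancel X.m (h1p.symm.trans h2)
    have h4 := add_left_cancel h3
    have h5 : br x ((X.D (md + s) - X.D s) - X.D md) = 0 := by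
      rw [br_subr, h4, sub_self]
    rw [br_antisymm, h5, neg_zero]
  have hcen := half12 X.toCtx hδd hcom
  have heq : (X.D (md + s) - X.D s) - X.D md = X.D (md + s) - X.D md - X.D s := by abel
  exact heq ▸ hcen

/-! ### D(e₂) is central -/

lemma De2Z (X : DCtx R) : X.D X.toCtx.e2 ∈ rctr R := by
  have hd : IsDiag X.toCtx (X.D X.toCtx.e2) := L1 X (diag_22 X.toCtx (e2_mem22 X.toCtx))
  apply half21 X.toCtx hd
  intro y hy
  have h := DQ X hy X.toCtx.e2
  have h1 : br y X.toCtx.e2 = -y := by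
    rw [br, p21_e2r X.toCtx hy, p21_e2l X.toCtx hy, zero_sub]
  have h2 : br (X.D y) X.toCtx.e2 = -(X.D y) := by
    rw [br, p21_e2r X.toCtx (X.hccB y hy), p21_e2l X.toCtx (X.hccB y hy), zero_sub]
  rw [h1, h2, C2_21 X hy] at h
  have h3 : br y (X.D X.toCtx.e2) = 0 := left_eq_add.mp h
  rw [br_antisymm, h3, neg_zero]

/-! ### mixed off-diagonal component lemma -/

lemma LEMH (X : DCtx R) {xt yt : R} (hx : xt ∈ P12 X.toCtx.e1) (hy : yt ∈ P21 X.toCtx.e1) :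
    pr21 X.toCtx (X.D (xt + yt)) = X.D yt := by
  have hhmem : pr21 X.toCtx (X.D (xt + yt)) - X.D yt ∈ P21 X.toCtx.e1 :=
    mem21_sub X.toCtx (pr21_mem X.toCtx _) (X.hccB yt hy)
  have key : ∀ x ∈ P12 X.toCtx.e1,
      br x (pr21 X.toCtx (X.D (xt + yt)) - X.D yt) ∈ rctr R := by
    intro x hx'
    have h1 := DX X hx' (xt + yt)
    have harg : br x (xt + yt) = br x yt + br x xt := by
      rw [br_addr]; exact add_comm _ _
    rw [harg, smul_add] at h1
    have hxi := XI X (diag_zsmul X.toCtx (br_12_21_diag X.toCtx hx' hy) ((-1:ℤ)^X.m))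
      (mem21_zsmul X.toCtx (br_12_12_mem X.toCtx hx' hx) ((-1:ℤ)^X.m))
    rw [h1, DX X hx' yt] at hxi
    have hbxW : br x (X.D (xt + yt)) = br x (pr12 X.toCtx (X.D (xt + yt)))
        + br x (pr21 X.toCtx (X.D (xt + yt)))
        + br x (pr11 X.toCtx (X.D (xt + yt)) + pr22 X.toCtx (X.D (xt + yt))) := by
      rw [← br_addr, ← br_addr]
      congr 1
      conv_lhs => rw [← pr_sum X.toCtx (X.D (xt + yt))]
      abel
    have hexp : ((-1:ℤ)^X.m) • (br (X.D x) (xt + yt) + br x (X.D (xt + yt)))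
        - ((-1:ℤ)^X.m) • (br (X.D x) yt + br x (X.D yt))
        - X.D (((-1:ℤ)^X.m) • br x xt)
        = (((-1:ℤ)^X.m) • (br (X.D x) xt + br x (pr12 X.toCtx (X.D (xt + yt))))
            - X.D (((-1:ℤ)^X.m) • br x xt))
          + ((-1:ℤ)^X.m) • br x (pr11 X.toCtx (X.D (xt + yt)) + pr22 X.toCtx (X.D (xt + yt)))
          + ((-1:ℤ)^X.m) • (br x (pr21 X.toCtx (X.D (xt + yt))) - br x (X.D yt)) := by
      rw [br_addr (X.D x) xt yt, hbxW]
      simp only [smul_add, smul_sub]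
      abel
    rw [hexp] at hxi
    have hA : (((-1:ℤ)^X.m) • (br (X.D x) xt + br x (pr12 X.toCtx (X.D (xt + yt))))
        - X.D (((-1:ℤ)^X.m) • br x xt)) ∈ P21 X.toCtx.e1 := by
      apply mem21_sub X.toCtx
      · exact mem21_zsmul X.toCtx (mem21_add X.toCtx
          (br_12_12_mem X.toCtx (X.hccA x hx') hx)
          (br_12_12_mem X.toCtx hx' (pr12_mem X.toCtx _))) _
      · exact X.hccB _ (mem21_zsmul X.toCtx (br_12_12_mem X.toCtx hx' hx) _)
    have hB : ((-1:ℤ)^X.m) • br x (pr11 X.toCtx (X.D (xt + yt)) + pr22 X.toCtx (X.D (xt + yt)))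
        ∈ P12 X.toCtx.e1 :=
      mem12_zsmul X.toCtx (br_12_diag X.toCtx hx'
        (diag_add X.toCtx (diag_11 X.toCtx (pr11_mem X.toCtx _))
          (diag_22 X.toCtx (pr22_mem X.toCtx _)))) _
    have hCC : IsDiag X.toCtx (((-1:ℤ)^X.m) • (br x (pr21 X.toCtx (X.D (xt + yt)))
        - br x (X.D yt))) :=
      diag_zsmul X.toCtx (diag_sub X.toCtx (br_12_21_diag X.toCtx hx' (pr21_mem X.toCtx _))
        (br_12_21_diag X.toCtx hx' (X.hccB yt hy))) _
    -- project the central element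
    have h21 := pr21_central X.toCtx hxi
    rw [pr21_add, pr21_add, (pr_21 X.toCtx hA).2.2.1, (pr_12 X.toCtx hB).2.2.1, hCC.2,
      add_zero, add_zero] at h21
    have h12 := pr12_central X.toCtx hxi
    rw [pr12_add, pr12_add, (pr_21 X.toCtx hA).2.1, (pr_12 X.toCtx hB).2.1, hCC.1,
      add_zero, zero_add] at h12
    rw [h21, h12, zero_add, zero_add] at hxi
    have hfin : br x (pr21 X.toCtx (X.D (xt + yt)) - X.D yt)
        = ((-1:ℤ)^X.m) • (((-1:ℤ)^X.m) • (br x (pr21 X.toCtx (X.D (xt + yt)))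
            - br x (X.D yt))) := by
      rw [smul_smul, epse, one_smul, br_subr]
    rw [hfin]
    exact rctr_zsmul hxi _
  have hkill : ∀ x ∈ P12 X.toCtx.e1, (pr21 X.toCtx (X.D (xt + yt)) - X.D yt) * x = 0 :=
    fun x hx' => (zt21 X.toCtx hhmem hx' (key x hx')).2
  have hh0 := X.toCtx.hc1b _ hhmem hkill
  exact sub_eq_zero.mp hh0

/-! ### additivity on P21 -/

lemma e1_mem11' (C : Ctx R) : C.e1 ∈ P11 C.e1 := ⟨C.he, C.he⟩

lemma br_p21_e1 (C : Ctx R) {y : R} (hy : y ∈ P21 C.e1) : br y C.e1 = y := by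
  rw [br, hy.2, hy.1, sub_zero]

lemma br_e2_p21 (C : Ctx R) {y : R} (hy : y ∈ P21 C.e1) : br C.e2 y = y := by
  rw [br, p21_e2l C hy, p21_e2r C hy, sub_zero]

lemma ADD21 (X : DCtx R) {p q : R} (hp : p ∈ P21 X.toCtx.e1) (hq : q ∈ P21 X.toCtx.e1) :
    X.D (p + q) = X.D p + X.D q := by
  have hqp12 : q*p - p*q ∈ P12 X.toCtx.e1 :=
    mem12_sub X.toCtx (mul_21_21 X.toCtx hq hp) (mul_21_21 X.toCtx hp hq)
  have hbr : br (X.toCtx.e2 + q) (X.toCtx.e1 + p) = (p + q) + (q*p - p*q) := by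
    simp only [br, add_mul, mul_add]
    rw [hq.2, e2e1 X.toCtx, p21_e2l X.toCtx hp, hq.1, e1e2 X.toCtx, p21_e2r X.toCtx hp]
    abel
  have h := DA X (X.toCtx.e2 + q) (X.toCtx.e1 + p)
  rw [hbr, chE_add, chE_p21 X.toCtx (mem21_add X.toCtx hp hq), chE_p12 X.toCtx hqp12] at h
  have hterm1 : br (X.D (X.toCtx.e2 + q)) (X.toCtx.e1 + p) = X.D q + br (X.D q) p := by
    have hdec : X.D (X.toCtx.e2 + q)
        = (X.D (X.toCtx.e2 + q) - X.D X.toCtx.e2 - X.D q) + X.D X.toCtx.e2 + X.D q := by abel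
    rw [hdec, br_addl, br_addl,
      br_central_l (XI X (diag_22 X.toCtx (e2_mem22 X.toCtx)) hq) _,
      br_central_l (De2Z X) _, zero_add, zero_add, br_addr,
      br_p21_e1 X.toCtx (X.hccB q hq)]
  have hterm2 : br (X.toCtx.e2 + q) (X.D (X.toCtx.e1 + p)) = X.D p + br q (X.D p) := by
    have hdec : X.D (X.toCtx.e1 + p)
        = (X.D (X.toCtx.e1 + p) - X.D X.toCtx.e1 - X.D p) + X.D X.toCtx.e1 + X.D p := by abel
    rw [hdec, br_addr, br_addr,
      br_central_r (XI X (diag_11 X.toCtx (e1_mem11' X.toCtx)) hp) _,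
      br_central_r X.hDe1 _, zero_add, zero_add, br_addl,
      br_e2_p21 X.toCtx (X.hccB p hp)]
  rw [hterm1, hterm2, chE_add, chE_add, chE_p21 X.toCtx (X.hccB q hq),
    chE_p21 X.toCtx (X.hccB p hp),
    chE_p12 X.toCtx (br_21_21_mem X.toCtx (X.hccB q hq) hp),
    chE_p12 X.toCtx (br_21_21_mem X.toCtx hq (X.hccB p hp))] at h
  have h21 := congrArg (pr21 X.toCtx) h
  rw [add_comm (p + q) (((-1:ℤ)^X.m) • (q*p - p*q))] at h21
  rw [LEMH X (mem12_zsmul X.toCtx hqp12 _) (mem21_add X.toCtx hp hq)] at h21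
  rw [pr21_add, pr21_add, pr21_add, (pr_21 X.toCtx (X.hccB q hq)).2.2.1,
    (pr_21 X.toCtx (X.hccB p hp)).2.2.1, pr21_zsmul, pr21_zsmul,
    (pr_12 X.toCtx (br_21_21_mem X.toCtx (X.hccB q hq) hp)).2.2.1,
    (pr_12 X.toCtx (br_21_21_mem X.toCtx hq (X.hccB p hp))).2.2.1,
    smul_zero, add_zero, add_zero] at h21
  rw [h21, add_comm]

/-! ### central multiple helpers -/

lemma p11_e2r (C : Ctx R) {w : R} (h : w ∈ P11 C.e1) : w * C.e2 = 0 := by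
  rw [Ctx.e2, mul_sub, mul_one, h.2, sub_self]

lemma p22_e2r (C : Ctx R) {w : R} (h : w ∈ P22 C.e1) : w * C.e2 = w := by
  rw [Ctx.e2, mul_sub, mul_one, h.2, sub_zero]

lemma zmul_e1_21 (C : Ctx R) {z : R} (hz : z ∈ rctr R) {y : R} (hy : y ∈ P21 C.e1) :
    y * (z * C.e1) = z * y := by
  rw [← zas2 C hz y C.e1, ← hz y, zas1 C hz y C.e1, hy.2]

lemma zmul_e2_21 (C : Ctx R) {z : R} (hz : z ∈ rctr R) {y : R} (hy : y ∈ P21 C.e1) :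
    (z * C.e2) * y = z * y := by
  rw [zas1 C hz C.e2 y, p21_e2l C hy]

lemma zmul_e1_mem11 (C : Ctx R) {z : R} (hz : z ∈ rctr R) : z * C.e1 ∈ P11 C.e1 := by
  constructor
  · rw [← zas2 C hz C.e1 C.e1, ← hz C.e1, zas1 C hz C.e1 C.e1, C.he]
  · rw [zas1 C hz C.e1 C.e1, C.he]

lemma zmul_e2_mem22 (C : Ctx R) {z : R} (hz : z ∈ rctr R) : z * C.e2 ∈ P22 C.e1 := by
  constructor
  · rw [← zas2 C hz C.e1 C.e2, ← hz C.e1, zas1 C hz C.e1 C.e2, e1e2 C, mul_zero]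
  · rw [zas1 C hz C.e2 C.e1, e2e1 C, mul_zero]

/-! ### K identities -/

lemma Kgen21 (X : DCtx R) {md y : R} (hmd : md ∈ P11 X.toCtx.e1) (hy : y ∈ P21 X.toCtx.e1) :
    X.D (y * md) = X.D y * md
      + (y * pr11 X.toCtx (X.D md) - pr22 X.toCtx (X.D md) * y) := by
  have h := DQ X hy md
  have h1 : br y md = y * md := by rw [br, mul_11_21 X.toCtx hmd hy, sub_zero]
  have h2 : br (X.D y) md = X.D y * md := by
    rw [br, mul_11_21 X.toCtx hmd (X.hccB y hy), sub_zero]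
  have h3 : br y (X.D md) = y * pr11 X.toCtx (X.D md) - pr22 X.toCtx (X.D md) * y := by
    conv_lhs => rw [diag_decomp X.toCtx (L1 X (diag_11 X.toCtx hmd))]
    rw [br_addr, br, br, mul_11_21 X.toCtx (pr11_mem X.toCtx _) hy,
      mul_21_22 X.toCtx hy (pr22_mem X.toCtx _), sub_zero, zero_sub]
    abel
  rw [h1, h2, h3] at h
  exact h

lemma Kgen22 (X : DCtx R) {md y : R} (hmd : md ∈ P22 X.toCtx.e1) (hy : y ∈ P21 X.toCtx.e1) :
    X.D (md * y) = md * X.D y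
      + (pr22 X.toCtx (X.D md) * y - y * pr11 X.toCtx (X.D md)) := by
  have h := DQ X hy md
  have h1 : br y md = -(md * y) := by rw [br, mul_21_22 X.toCtx hy hmd, zero_sub]
  have h2 : br (X.D y) md = -(md * X.D y) := by
    rw [br, mul_21_22 X.toCtx (X.hccB y hy) hmd, zero_sub]
  have h3 : br y (X.D md) = y * pr11 X.toCtx (X.D md) - pr22 X.toCtx (X.D md) * y := by
    conv_lhs => rw [diag_decomp X.toCtx (L1 X (diag_22 X.toCtx hmd))]
    rw [br_addr, br, br, mul_11_21 X.toCtx (pr11_mem X.toCtx _) hy,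
      mul_21_22 X.toCtx hy (pr22_mem X.toCtx _), sub_zero, zero_sub]
    abel
  rw [h1, h2, h3, C2_21 X (mul_22_21 X.toCtx hmd hy)] at h
  have h5 := congrArg Neg.neg h
  rw [neg_neg] at h5
  rw [h5]; abel

/-! ### the H2 identity -/

lemma H2L (X : DCtx R) {a b : R} (ha : a ∈ P12 X.toCtx.e1) (hb : b ∈ P21 X.toCtx.e1)
    {y : R} (hy : y ∈ P21 X.toCtx.e1) :
    X.D ((b*a)*y + y*(a*b)) =
      ((b*X.D a + X.D b*a)*y + y*(X.D a*b + a*X.D b)) + ((b*a)*X.D y + X.D y*(a*b)) := by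
  have hu : a*b ∈ P11 X.toCtx.e1 := mul_12_21 X.toCtx ha hb
  have hv : b*a ∈ P22 X.toCtx.e1 := mul_21_12 X.toCtx hb ha
  have hA : X.D a*b + a*X.D b ∈ P11 X.toCtx.e1 :=
    mem11_add X.toCtx (mul_12_21 X.toCtx (X.hccA a ha) hb)
      (mul_12_21 X.toCtx ha (X.hccB b hb))
  have hB : b*X.D a + X.D b*a ∈ P22 X.toCtx.e1 :=
    mem22_add X.toCtx (mul_21_12 X.toCtx hb (X.hccA a ha))
      (mul_21_12 X.toCtx (X.hccB b hb) ha)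
  have hDvu : X.D (br b a) = (b*X.D a + X.D b*a) - (X.D a*b + a*X.D b) := by
    rw [DQ X hb a, br, br]
    abel
  have h := DA X (br b a) y
  have harg : br (br b a) y = (b*a)*y + y*(a*b) := by
    rw [br, br, sub_mul, mul_sub, mul_11_21 X.toCtx hu hy, mul_21_22 X.toCtx hy hv]
    abel
  have hDbr : br (X.D (br b a)) y
      = ((b*X.D a + X.D b*a)*y + y*(X.D a*b + a*X.D b)) := by
    rw [hDvu, br, sub_mul, mul_sub, mul_11_21 X.toCtx hA hy, mul_21_22 X.toCtx hy hB]
    abel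
  have hbrD : br (br b a) (X.D y) = (b*a)*X.D y + X.D y*(a*b) := by
    rw [br, br, sub_mul, mul_sub, mul_11_21 X.toCtx hu (X.hccB y hy),
      mul_21_22 X.toCtx (X.hccB y hy) hv]
    abel
  rw [harg, hDbr, hbrD,
    chE_p21 X.toCtx (mem21_add X.toCtx (mul_22_21 X.toCtx hv hy) (mul_21_11 X.toCtx hy hu)),
    chE_p21 X.toCtx (mem21_add X.toCtx (mul_22_21 X.toCtx hB hy) (mul_21_11 X.toCtx hy hA)),
    chE_p21 X.toCtx (mem21_add X.toCtx (mul_22_21 X.toCtx hv (X.hccB y hy))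
      (mul_21_11 X.toCtx (X.hccB y hy) hu))] at h
  exact h

/-! ### the core result -/

lemma core (X : DCtx R) {a b : R} (ha : a ∈ P12 X.toCtx.e1) (hb : b ∈ P21 X.toCtx.e1)
    {zu zv : R} (hzuC : zu ∈ rctr R) (hzvC : zv ∈ rctr R)
    (hzue : pr22 X.toCtx (X.D (a*b)) = zu * X.toCtx.e2)
    (hzve : pr11 X.toCtx (X.D (b*a)) = zv * X.toCtx.e1) :
    (X.D (a*b) - (X.D a * b + a * X.D b) ∈ rctr R) ∧
    (X.D (b*a) - (X.D b * a + b * X.D a) ∈ rctr R) := by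
  have hu : a*b ∈ P11 X.toCtx.e1 := mul_12_21 X.toCtx ha hb
  have hv : b*a ∈ P22 X.toCtx.e1 := mul_21_12 X.toCtx hb ha
  have hA : X.D a*b + a*X.D b ∈ P11 X.toCtx.e1 :=
    mem11_add X.toCtx (mul_12_21 X.toCtx (X.hccA a ha) hb)
      (mul_12_21 X.toCtx ha (X.hccB b hb))
  have hB : b*X.D a + X.D b*a ∈ P22 X.toCtx.e1 :=
    mem22_add X.toCtx (mul_21_12 X.toCtx hb (X.hccA a ha))
      (mul_21_12 X.toCtx (X.hccB b hb) ha)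
  have hzeta : ∀ y ∈ P21 X.toCtx.e1,
      (pr22 X.toCtx (X.D (b*a)) - (b*X.D a + X.D b*a) - zv * X.toCtx.e2) * y
      + y * (pr11 X.toCtx (X.D (a*b)) - (X.D a*b + a*X.D b) - zu * X.toCtx.e1) = 0 := by
    intro y hy
    have hH2 := H2L X ha hb hy
    rw [ADD21 X (mul_22_21 X.toCtx hv hy) (mul_21_11 X.toCtx hy hu),
      Kgen22 X hv hy, Kgen21 X hu hy, hzue, hzve,
      zmul_e1_21 X.toCtx hzvC hy, zmul_e2_21 X.toCtx hzuC hy] at hH2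
    have h0 := sub_eq_zero_of_eq hH2
    simp only [sub_mul, mul_sub]
    rw [zmul_e2_21 X.toCtx hzvC hy, zmul_e1_21 X.toCtx hzuC hy, ← h0]
    abel
  set c1 := pr11 X.toCtx (X.D (a*b)) - (X.D a*b + a*X.D b) - zu * X.toCtx.e1 with hc1def
  set c2 := pr22 X.toCtx (X.D (b*a)) - (b*X.D a + X.D b*a) - zv * X.toCtx.e2 with hc2def
  have hc1m : c1 ∈ P11 X.toCtx.e1 :=
    mem11_sub X.toCtx (mem11_sub X.toCtx (pr11_mem X.toCtx _) hA) (zmul_e1_mem11 X.toCtx hzuC)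
  have hc2m : c2 ∈ P22 X.toCtx.e1 :=
    mem22_sub X.toCtx (mem22_sub X.toCtx (pr22_mem X.toCtx _) hB) (zmul_e2_mem22 X.toCtx hzvC)
  have hPd : IsDiag X.toCtx (c1 - c2) :=
    diag_sub X.toCtx (diag_11 X.toCtx hc1m) (diag_22 X.toCtx hc2m)
  have hPcom : ∀ y ∈ P21 X.toCtx.e1, br (c1 - c2) y = 0 := by
    intro y hy
    rw [br, sub_mul, mul_sub, mul_11_21 X.toCtx hc1m hy, mul_21_22 X.toCtx hy hc2m,
      zero_sub, sub_zero, sub_eq_add_neg, ← neg_add, add_comm (c2*y) (y*c1)]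
    rw [add_comm (y*c1) (c2*y), hzeta y hy, neg_zero]
  have hPc := half21 X.toCtx hPd hPcom
  have hc1e : (c1 - c2) * X.toCtx.e1 = c1 := by
    rw [sub_mul, hc1m.2, hc2m.2, sub_zero]
  have hd1 : pr11 X.toCtx (X.D (a*b)) = c1 + (X.D a*b + a*X.D b) + zu * X.toCtx.e1 := by
    rw [hc1def]; abel
  have hf2 : pr22 X.toCtx (X.D (b*a)) = c2 + (b*X.D a + X.D b*a) + zv * X.toCtx.e2 := by
    rw [hc2def]; abel
  have hKb : X.D b*(a*b) + (b*c1 + (b*(X.D a*b) + b*(a*X.D b)) + zu*b) - zu*b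
      = (b*a)*X.D b + (c2*b + ((b*X.D a)*b + (X.D b*a)*b) + zv*b) - zv*b := by
    have h := Kgen22 X hv hb
    rw [flex X.toCtx b a, Kgen21 X hu hb, hzve, hzue, hd1, hf2] at h
    simp only [mul_add, add_mul] at h
    rw [zmul_e1_21 X.toCtx hzuC hb, zmul_e1_21 X.toCtx hzvC hb,
      zmul_e2_21 X.toCtx hzuC hb, zmul_e2_21 X.toCtx hzvC hb] at h
    have h0 := sub_eq_zero_of_eq h
    rw [← sub_eq_zero, ← h0]
    abel
  have hEQB0 : ((b*X.D a)*b - b*(X.D a*b)) + ((X.D b*a)*b - X.D b*(a*b))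
      + ((b*a)*X.D b - b*(a*X.D b)) = 0 := by
    have k1 : (b*X.D a)*b - b*(X.D a*b) = 0 := sub_eq_zero_of_eq (flex X.toCtx b (X.D a))
    have k2 : (X.D b*a)*b - X.D b*(a*b) = A3 (X.D b) a b := rfl
    have k3 : (b*a)*X.D b - b*(a*X.D b) = A3 b a (X.D b) := rfl
    rw [k1, k2, k3, swap13 X.toCtx (X.D b) a b, zero_add, neg_add_cancel]
  have hzc'' : c2*b = -(b*c1) := eq_neg_of_add_eq_zero_left (hzeta b hb)
  rw [hzc''] at hKb
  have hbc1 : b*c1 + b*c1 = 0 := by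
    calc b*c1 + b*c1
        = ((X.D b*(a*b) + (b*c1 + (b*(X.D a*b) + b*(a*X.D b)) + zu*b) - zu*b)
            - ((b*a)*X.D b + (-(b*c1) + ((b*X.D a)*b + (X.D b*a)*b) + zv*b) - zv*b))
          + (((b*X.D a)*b - b*(X.D a*b)) + ((X.D b*a)*b - X.D b*(a*b))
            + ((b*a)*X.D b - b*(a*X.D b))) := by abel
      _ = 0 := by
          rw [sub_eq_zero_of_eq hKb, hEQB0, add_zero]
  have hbc10 : b*c1 = 0 := X.toCtx.tor2 _ hbc1
  have hPb : (c1 - c2) * b = 0 := by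
    rw [← zmul_e1_21 X.toCtx hPc hb, hc1e, hbc10]
  by_cases hP0 : c1 - c2 = 0
  · have hceq := sub_eq_zero.mp hP0
    have hc10 : c1 = 0 := by rw [← hc1m.1, hceq, hc2m.1]
    have hc20 : c2 = 0 := by rw [← hceq, hc10]
    have he12u : zu * X.toCtx.e1 + zu * X.toCtx.e2 = zu := by
      rw [← mul_add]
      have h1 : X.toCtx.e1 + X.toCtx.e2 = 1 := by rw [Ctx.e2]; abel
      rw [h1, mul_one]
    have he12v : zv * X.toCtx.e1 + zv * X.toCtx.e2 = zv := by
      rw [← mul_add]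
      have h1 : X.toCtx.e1 + X.toCtx.e2 = 1 := by rw [Ctx.e2]; abel
      rw [h1, mul_one]
    constructor
    · have heq : X.D (a*b) - (X.D a*b + a*X.D b) = zu := by
        rw [diag_decomp X.toCtx (L1 X (diag_11 X.toCtx hu)), hd1, hzue, hc10]
        conv_rhs => rw [← he12u]
        abel
      rw [heq]; exact hzuC
    · have heq : X.D (b*a) - (X.D b*a + b*X.D a) = zv := by
        rw [diag_decomp X.toCtx (L1 X (diag_22 X.toCtx hv)), hf2, hzve, hc20]
        conv_rhs => rw [← he12v]
        abel
      rw [heq]; exact hzvC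
  · obtain ⟨s, hs⟩ := X.toCtx.hc4 (c1 - c2) hPc hP0 1
    have hb0 : b = 0 := by
      have h1 : b = ((c1-c2)*s)*b := by rw [hs, one_mul]
      rw [hPc s, zas2 X.toCtx hPc s b, hPb, mul_zero] at h1
      exact h1
    constructor
    · rw [hb0, mul_zero, mul_zero, D0 X, mul_zero, add_zero, sub_zero]
      exact rctr_zero
    · rw [hb0, zero_mul, zero_mul, D0 X, zero_mul, add_zero, sub_zero]
      exact rctr_zero

end S18

theorem stmt18 {R : Type*} [NonAssocRing R] (halt : IsAlt R)
    (e₁ e₂ : R) (he₂ : e₂ = 1 - e₁)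
    (he : e₁ * e₁ = e₁) (hne0 : e₁ ≠ 0) (hne1 : e₁ ≠ 1)
    (n : ℕ) (hn : 2 ≤ n)
    (htor : ∀ k ∈ ({2, 3, n - 1, n - 3} : Set ℕ), 1 ≤ k → ∀ x : R, k • x = 0 → x = 0)
    (hc1 : (∀ x ∈ P12 e₁, (∀ y ∈ P21 e₁, x * y = 0) → x = 0) ∧
           (∀ x ∈ P21 e₁, (∀ y ∈ P12 e₁, x * y = 0) → x = 0))
    (hc2 : (∀ x ∈ P11 e₁, (∀ y ∈ P12 e₁, x * y = 0) → x = 0) ∧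
           (∀ x ∈ P11 e₁, (∀ y ∈ P21 e₁, y * x = 0) → x = 0))
    (hc3 : (∀ x ∈ P22 e₁, (∀ y ∈ P12 e₁, y * x = 0) → x = 0) ∧
           (∀ x ∈ P22 e₁, (∀ y ∈ P21 e₁, x * y = 0) → x = 0))
    (hc4 : ∀ z ∈ rctr R, z ≠ 0 → ∀ r : R, ∃ s : R, z * s = r)
    (D : R → R) (hD : IsMultLieNDeriv n D)
    (ha : ∀ a ∈ P11 e₁, ∃ z ∈ rctr R, (e₂ * D a) * e₂ = z * e₂)
    (hb : ∀ a ∈ P22 e₁, ∃ z ∈ rctr R, (e₁ * D a) * e₁ = z * e₁)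
    (hcc : (∀ a ∈ P12 e₁, D a ∈ P12 e₁) ∧ (∀ a ∈ P21 e₁, D a ∈ P21 e₁))
    (hDe₁ : D e₁ ∈ rctr R)
    :
    (∀ a ∈ P12 e₁, ∀ b ∈ P21 e₁, D (a * b) - (D a * b + a * D b) ∈ rctr R) ∧
    (∀ a ∈ P21 e₁, ∀ b ∈ P12 e₁, D (a * b) - (D a * b + a * D b) ∈ rctr R) := by
  subst he₂
  obtain ⟨m, rfl⟩ : ∃ m, n = m + 2 := ⟨n - 2, by omega⟩
  have tor2 : ∀ x : R, x + x = 0 → x = 0 := by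
    intro x hx
    refine htor 2 (Set.mem_insert _ _) (by norm_num) x ?_
    rw [two_nsmul]; exact hx
  have tor3 : ∀ x : R, x + x + x = 0 → x = 0 := by
    intro x hx
    refine htor 3 (Set.mem_insert_of_mem _ (Set.mem_insert _ _)) (by norm_num) x ?_
    have h3 : (3:ℕ) • x = x + x + x := by
      rw [show (3:ℕ) = 2 + 1 from rfl, add_nsmul, two_nsmul, one_nsmul]
    rw [h3]; exact hx
  let C : S18.Ctx R := ⟨e₁, halt, he, tor2, tor3, hc1.1, hc1.2, hc2.1, hc2.2, hc3.1, hc3.2, hc4⟩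
  let X : S18.DCtx R := ⟨C, m, D, hD, hcc.1, hcc.2, hDe₁⟩
  have convA : ∀ u ∈ P11 e₁, ∃ z ∈ rctr R, S18.pr22 C (D u) = z * C.e2 := by
    intro u hu
    obtain ⟨z, hz, hze⟩ := ha u hu
    refine ⟨z, hz, ?_⟩
    show C.e2 * (D u * C.e2) = z * C.e2
    rw [← S18.flex C C.e2 (D u)]
    exact hze
  have convB : ∀ u ∈ P22 e₁, ∃ z ∈ rctr R, S18.pr11 C (D u) = z * C.e1 := by
    intro u hu
    obtain ⟨z, hz, hze⟩ := hb u hu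
    refine ⟨z, hz, ?_⟩
    show C.e1 * (D u * C.e1) = z * C.e1
    rw [← S18.flex C C.e1 (D u)]
    exact hze
  constructor
  · intro a ha' b hb'
    obtain ⟨zu, hzuC, hzue⟩ := convA (a*b) (S18.mul_12_21 C ha' hb')
    obtain ⟨zv, hzvC, hzve⟩ := convB (b*a) (S18.mul_21_12 C hb' ha')
    exact (S18.core X ha' hb' hzuC hzvC hzue hzve).1
  · intro a ha' b hb'
    obtain ⟨zu, hzuC, hzue⟩ := convA (b*a) (S18.mul_12_21 C hb' ha')
    obtain ⟨zv, hzvC, hzve⟩ := convB (a*b) (S18.mul_21_12 C ha' hb')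
    exact (S18.core X hb' ha' hzuC hzvC hzue hzve).2
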